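/- arXiv:0711.0097 — 4 statements merged into one kernel-verified Lean document; each statement's English description precedes it below -/
import Mathlib

section
/- Let H be a good group of exponent 4 and X a subset of H such that the Frattini subgroup Φ(H) is the (internal) direct product of the subgroups ⟨x²⟩ for x ∈ X, with each x² nontrivial. Then either the subgroup ⟨X⟩ is abelian, or all but one of the elements of X commute with each other and are inverted under conjugation by the remaining one. -/
/-- A group is *dihedral* if it is isomorphic to some `DihedralGroup n` with `n ≠ 0`. -/
def IsDihedralGroup (Q : Type*) [Group Q] : Prop :=
  ∃ n : ℕ, n ≠ 0 ∧ Nonempty (Q ≃* DihedralGroup n)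

/-- A 2-group `G` is *good* if for all `g h : G` the subgroup `⟨g²⟩` is normal in `G`
and the quotient `⟨g,h⟩/⟨g²⟩` is abelian or dihedral. -/
def IsGood (G : Type*) [Group G] : Prop :=
  IsPGroup 2 G ∧
  ∀ g h : G, ∃ hn : (Subgroup.zpowers (g ^ 2)).Normal,
    haveI := hn.subgroupOf (Subgroup.closure {g, h})
    (∀ x y : ↥(Subgroup.closure {g, h}) ⧸
        (Subgroup.zpowers (g ^ 2)).subgroupOf (Subgroup.closure {g, h}), x * y = y * x) ∨
    IsDihedralGroup (↥(Subgroup.closure {g, h}) ⧸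
        (Subgroup.zpowers (g ^ 2)).subgroupOf (Subgroup.closure {g, h}))



private lemma mem_zpowers_sq {G : Type*} [Group G] {a : G} (ha : a * a = 1) {g : G} :
    g ∈ Subgroup.zpowers a ↔ g = 1 ∨ g = a := by
  constructor
  · rintro ⟨k, hk⟩
    rw [← hk]
    show a ^ k = 1 ∨ a ^ k = a
    have h2 : a ^ (2:ℤ) = 1 := by rw [zpow_two, ha]
    have hmod : a ^ k = a ^ (k % 2) := by
      conv_lhs => rw [← Int.emod_add_mul_ediv k 2]
      rw [zpow_add, zpow_mul, h2, one_zpow, mul_one]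
    rcases Int.emod_two_eq k with h | h <;> rw [hmod, h]
    · exact Or.inl (zpow_zero a)
    · exact Or.inr (zpow_one a)
  · rintro (rfl | rfl)
    · exact one_mem _
    · exact Subgroup.mem_zpowers _

private lemma central_of_normal_sq {G : Type*} [Group G] {a : G} (ha : a * a = 1)
    (hn : (Subgroup.zpowers a).Normal) : ∀ g : G, g * a = a * g := by
  intro g
  by_cases h1 : a = 1
  · rw [h1, mul_one, one_mul]
  · have hmem := hn.conj_mem a (Subgroup.mem_zpowers a) g
    rcases (mem_zpowers_sq ha).mp hmem with h | h
    · exfalso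
      apply h1
      have := congrArg (fun z => g⁻¹ * z * g) h
      simpa [mul_assoc] using this
    · have := congrArg (fun z => z * g) h
      simpa [mul_assoc] using this

private lemma central_inv {G : Type*} [Group G] {c : G} (hc : ∀ g : G, g * c = c * g) :
    ∀ g : G, g * c⁻¹ = c⁻¹ * g := by
  intro g
  calc g * c⁻¹ = c⁻¹ * (c * g) * c⁻¹ := by group
    _ = c⁻¹ * (g * c) * c⁻¹ := by rw [hc g]
    _ = c⁻¹ * g := by group

private lemma comm_mul_left {G : Type*} [Group G] (a b w : G)
    (hc : ∀ g : G, g * (a⁻¹ * w⁻¹ * a * w) = (a⁻¹ * w⁻¹ * a * w) * g) :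
    (a*b)⁻¹ * w⁻¹ * (a*b) * w = (a⁻¹ * w⁻¹ * a * w) * (b⁻¹ * w⁻¹ * b * w) := by
  calc (a*b)⁻¹ * w⁻¹ * (a*b) * w
      = (b⁻¹ * (a⁻¹ * w⁻¹ * a * w)) * (w⁻¹ * b * w) := by group
    _ = ((a⁻¹ * w⁻¹ * a * w) * b⁻¹) * (w⁻¹ * b * w) := by rw [hc b⁻¹]
    _ = (a⁻¹ * w⁻¹ * a * w) * (b⁻¹ * w⁻¹ * b * w) := by group

private lemma comm_mul_right {G : Type*} [Group G] (w a b : G)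
    (hc : ∀ g : G, g * (w⁻¹ * a⁻¹ * w * a) = (w⁻¹ * a⁻¹ * w * a) * g) :
    w⁻¹ * (a*b)⁻¹ * w * (a*b) = (w⁻¹ * a⁻¹ * w * a) * (w⁻¹ * b⁻¹ * w * b) := by
  calc w⁻¹ * (a*b)⁻¹ * w * (a*b)
      = (w⁻¹ * b⁻¹ * w) * ((w⁻¹ * a⁻¹ * w * a) * b) := by group
    _ = (w⁻¹ * b⁻¹ * w) * (b * (w⁻¹ * a⁻¹ * w * a)) := by rw [← hc b]
    _ = (w⁻¹ * b⁻¹ * w * b) * (w⁻¹ * a⁻¹ * w * a) := by group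
    _ = (w⁻¹ * a⁻¹ * w * a) * (w⁻¹ * b⁻¹ * w * b) := by rw [hc]

private lemma sq_mul {G : Type*} [Group G] (a b : G)
    (hc : ∀ g : G, g * (a⁻¹ * b⁻¹ * a * b) = (a⁻¹ * b⁻¹ * a * b) * g) :
    (a*b)^2 = a^2 * b^2 * (a⁻¹ * b⁻¹ * a * b)⁻¹ := by
  have hcinv := central_inv hc
  calc (a*b)^2 = a * (a*b) * ((a⁻¹ * b⁻¹ * a * b)⁻¹ * b) := by rw [pow_two]; group
    _ = a * (a*b) * (b * (a⁻¹ * b⁻¹ * a * b)⁻¹) := by rw [hcinv b]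
    _ = a^2 * b^2 * (a⁻¹ * b⁻¹ * a * b)⁻¹ := by rw [pow_two, pow_two]; group

private lemma d4_dichotomy : ∀ a b : DihedralGroup 4, a^2 = 1 →
    (a*b = b*a ∨ a*b*a⁻¹*b = 1 ∨ b^2 = 1) := by decide

private lemma d1_sq : ∀ a : DihedralGroup 1, a^2 = 1 := by decide
private lemma d2_sq : ∀ a : DihedralGroup 2, a^2 = 1 := by decide

private lemma LP {H : Type*} [Group H] (hgood : IsGood H) (h4 : ∀ g : H, g ^ 4 = 1)
    (u v : H) (hu2 : ∀ g : H, g * u ^ 2 = u ^ 2 * g) (hv2 : ∀ g : H, g * v ^ 2 = v ^ 2 * g)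
    (hvn : v ^ 2 ∉ Subgroup.zpowers (u ^ 2)) :
    u⁻¹ * v⁻¹ * u * v = 1 ∨ u⁻¹ * v⁻¹ * u * v = u ^ 2 ∨
    u⁻¹ * v⁻¹ * u * v = v ^ 2 ∨ u⁻¹ * v⁻¹ * u * v = u ^ 2 * v ^ 2 := by
  obtain ⟨hn, hd⟩ := hgood.2 u v
  haveI := hn.subgroupOf (Subgroup.closure {u, v})
  set K := Subgroup.closure ({u, v} : Set H) with hK
  set N := (Subgroup.zpowers (u ^ 2)).subgroupOf K with hNdef
  have hu : u ∈ K := Subgroup.subset_closure (by simp)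
  have hv : v ∈ K := Subgroup.subset_closure (by simp)
  set uu : K := ⟨u, hu⟩ with huu
  set vv : K := ⟨v, hv⟩ with hvv
  set f := QuotientGroup.mk' N with hf
  have hq4 : ∀ q : K ⧸ N, q ^ 4 = 1 := by
    intro q
    refine QuotientGroup.induction_on q ?_
    intro k
    have hk4 : k ^ 4 = 1 := Subtype.ext (by simpa using h4 (k : H))
    show (f k) ^ 4 = 1
    rw [← map_pow, hk4, map_one]
  have hcomm_or : f uu * f vv = f vv * f uu ∨ f uu * (f vv * ((f uu)⁻¹ * f vv)) = 1 := by
    rcases hd with habel | ⟨n, hn0, ⟨e⟩⟩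
    · left; exact habel _ _
    · have hd4 : ∀ d : DihedralGroup n, d ^ 4 = 1 := by
        intro d
        have h1 := hq4 (e.symm d)
        have h2 := congrArg e h1
        rwa [map_pow, map_one, MulEquiv.apply_symm_apply] at h2
      have hdvd : n ∣ 4 := by
        have h1 := hd4 (DihedralGroup.r 1)
        rw [DihedralGroup.r_one_pow, DihedralGroup.one_def] at h1
        injection h1 with h2
        exact (ZMod.natCast_eq_zero_iff 4 n).mp h2
      have ha2 : (e (f uu)) ^ 2 = 1 := by
        have hmem : uu ^ 2 ∈ N := by
          rw [hNdef, Subgroup.mem_subgroupOf]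
          exact Subgroup.mem_zpowers (u ^ 2)
        have h1 : f (uu ^ 2) = 1 := (QuotientGroup.eq_one_iff _).mpr hmem
        rw [map_pow] at h1
        rw [← map_pow, h1, map_one]
      have hb2 : (e (f vv)) ^ 2 ≠ 1 := by
        intro h
        apply hvn
        rw [← map_pow, ← map_pow] at h
        have h1 : f (vv ^ 2) = 1 := by
          apply e.injective; rw [h, map_one]
        have h2 : vv ^ 2 ∈ N := (QuotientGroup.eq_one_iff _).mp h1
        rw [hNdef, Subgroup.mem_subgroupOf] at h2
        simpa using h2
      have hn4 : n ≤ 4 := Nat.le_of_dvd (by norm_num) hdvd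
      have hn1 : 1 ≤ n := Nat.pos_of_ne_zero hn0
      interval_cases n
      · exact absurd (d1_sq (e (f vv))) hb2
      · exact absurd (d2_sq (e (f vv))) hb2
      · exact absurd hdvd (by norm_num)
      · rcases d4_dichotomy (e (f uu)) (e (f vv)) ha2 with h | h | h
        · left
          apply e.injective
          rw [map_mul, map_mul, h]
        · right
          apply e.injective
          rw [map_one, map_mul, map_mul, map_mul, map_inv]
          calc e (f uu) * (e (f vv) * ((e (f uu))⁻¹ * e (f vv)))
              = e (f uu) * e (f vv) * (e (f uu))⁻¹ * e (f vv) := by group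
            _ = 1 := h
        · exact absurd h hb2
  have hcoe : ∀ w : K, f w = QuotientGroup.mk w := fun w => rfl
  rcases hcomm_or with h | h
  · -- commutator lies in zpowers (u^2)
    have h1 : f (uu⁻¹ * vv⁻¹ * uu * vv) = 1 := by
      rw [map_mul, map_mul, map_mul, map_inv, map_inv]
      calc (f uu)⁻¹ * (f vv)⁻¹ * f uu * f vv
          = (f uu)⁻¹ * (f vv)⁻¹ * (f uu * f vv) := by group
        _ = (f uu)⁻¹ * (f vv)⁻¹ * (f vv * f uu) := by rw [h]
        _ = 1 := by group
    have h2 : uu⁻¹ * vv⁻¹ * uu * vv ∈ N := (QuotientGroup.eq_one_iff _).mp h1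
    rw [hNdef, Subgroup.mem_subgroupOf] at h2
    have h3 : u⁻¹ * v⁻¹ * u * v ∈ Subgroup.zpowers (u ^ 2) := by simpa using h2
    have hsq : (u ^ 2) * (u ^ 2) = 1 := by rw [← pow_add]; exact h4 u
    rcases (mem_zpowers_sq hsq).mp h3 with h' | h'
    · exact Or.inl h'
    · exact Or.inr (Or.inl h')
  · -- u v u⁻¹ v ∈ zpowers (u^2)
    have h1 : f (uu * (vv * (uu⁻¹ * vv))) = 1 := by
      rw [map_mul, map_mul, map_mul, map_inv]
      exact h
    have h2 : uu * (vv * (uu⁻¹ * vv)) ∈ N := (QuotientGroup.eq_one_iff _).mp h1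
    rw [hNdef, Subgroup.mem_subgroupOf] at h2
    have h3 : u * (v * (u⁻¹ * v)) ∈ Subgroup.zpowers (u ^ 2) := by simpa using h2
    have hsq : (u ^ 2) * (u ^ 2) = 1 := by rw [← pow_add]; exact h4 u
    have hvsq : (v ^ 2) * (v ^ 2) = 1 := by rw [← pow_add]; exact h4 v
    rcases (mem_zpowers_sq hsq).mp h3 with h' | h'
    · -- s = 1 : c = v^2
      right; right; left
      have hv2' : (u * v * u⁻¹) * v = 1 := by rw [← h']; group
      have hv' : u * v * u⁻¹ = v⁻¹ := mul_eq_one_iff_eq_inv.mp hv2'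
      calc u⁻¹ * v⁻¹ * u * v = u⁻¹ * (u * v * u⁻¹) * u * v := by rw [hv']
        _ = v ^ 2 := by rw [pow_two v]; group
    · -- s = u^2 : c = u^2 v^2
      right; right; right
      have huv : u * v = u ^ 2 * v⁻¹ * u := by rw [← h']; group
      calc u⁻¹ * v⁻¹ * u * v = u⁻¹ * v⁻¹ * (u * v) := by group
        _ = u⁻¹ * v⁻¹ * (u ^ 2 * v⁻¹ * u) := by rw [huv]
        _ = u⁻¹ * (v⁻¹ * u ^ 2) * v⁻¹ * u := by group
        _ = u⁻¹ * (u ^ 2 * v⁻¹) * v⁻¹ * u := by rw [hu2 v⁻¹]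
        _ = u * (v⁻¹ * v⁻¹) * u := by rw [pow_two u]; group
        _ = u * (v ^ 2)⁻¹ * u := by rw [pow_two v, mul_inv_rev]
        _ = (v ^ 2)⁻¹ * u * u := by rw [central_inv hv2 u]
        _ = v ^ 2 * (u * u) := by rw [inv_eq_of_mul_eq_one_right hvsq, mul_assoc]
        _ = v ^ 2 * u ^ 2 := by rw [pow_two u]
        _ = u ^ 2 * v ^ 2 := hu2 (v ^ 2)

private lemma d4_comm : ∀ a b : DihedralGroup 4, a^2 ≠ 1 → b^2 ≠ 1 → a*b = b*a := by decide

private lemma LQ {H : Type*} [Group H] (hgood : IsGood H) (h4 : ∀ g : H, g ^ 4 = 1)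
    (w v : H) (hw : w ^ 2 = 1) {a b : H}
    (ha : a ∈ Subgroup.closure ({w, v} : Set H)) (hb : b ∈ Subgroup.closure ({w, v} : Set H))
    (ha2 : a ^ 2 ≠ 1) (hb2 : b ^ 2 ≠ 1) : a * b = b * a := by
  obtain ⟨hn, hd⟩ := hgood.2 w v
  haveI := hn.subgroupOf (Subgroup.closure {w, v})
  set K := Subgroup.closure ({w, v} : Set H) with hK
  set N := (Subgroup.zpowers (w ^ 2)).subgroupOf K with hNdef
  set f := QuotientGroup.mk' N with hf
  have hone : (1:H) * 1 = 1 := by rw [mul_one]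
  have hNmem : ∀ k : K, k ∈ N → k = 1 := by
    intro k hk
    rw [hNdef, Subgroup.mem_subgroupOf, hw] at hk
    rcases (mem_zpowers_sq hone).mp hk with h | h <;> exact Subtype.ext h
  have hinj : ∀ k k' : K, f k = f k' → k = k' := by
    intro k k' h
    have h1 : f (k⁻¹ * k') = 1 := by rw [map_mul, map_inv, ← h]; group
    have h2 : k⁻¹ * k' ∈ N := (QuotientGroup.eq_one_iff _).mp h1
    have h3 := hNmem _ h2
    rw [inv_mul_eq_one] at h3
    exact h3
  have hq4 : ∀ q : K ⧸ N, q ^ 4 = 1 := by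
    intro q
    refine QuotientGroup.induction_on q ?_
    intro k
    have hk4 : k ^ 4 = 1 := Subtype.ext (by simpa using h4 (k : H))
    show (f k) ^ 4 = 1
    rw [← map_pow, hk4, map_one]
  set aa : K := ⟨a, ha⟩ with haa
  set bb : K := ⟨b, hb⟩ with hbb
  suffices hs : aa * bb = bb * aa by
    have := congrArg (fun z : K => (z : H)) hs
    simpa using this
  rcases hd with habel | ⟨n, hn0, ⟨e⟩⟩
  · apply hinj; rw [map_mul, map_mul, habel]
  · have hd4 : ∀ d : DihedralGroup n, d ^ 4 = 1 := by
      intro d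
      have h1 := hq4 (e.symm d)
      have h2 := congrArg e h1
      rwa [map_pow, map_one, MulEquiv.apply_symm_apply] at h2
    have hdvd : n ∣ 4 := by
      have h1 := hd4 (DihedralGroup.r 1)
      rw [DihedralGroup.r_one_pow, DihedralGroup.one_def] at h1
      injection h1 with h2
      exact (ZMod.natCast_eq_zero_iff 4 n).mp h2
    have hsq : ∀ (k : K), k ^ 2 ≠ 1 → (e (f k)) ^ 2 ≠ 1 := by
      intro k hk h
      apply hk
      rw [← map_pow, ← map_pow] at h
      have h1 : f (k ^ 2) = 1 := by apply e.injective; rw [h, map_one]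
      exact hNmem _ ((QuotientGroup.eq_one_iff _).mp h1)
    have haa2 : aa ^ 2 ≠ 1 := fun h => ha2 (by simpa using congrArg (fun z : K => (z:H)) h)
    have hbb2 : bb ^ 2 ≠ 1 := fun h => hb2 (by simpa using congrArg (fun z : K => (z:H)) h)
    have hn4 : n ≤ 4 := Nat.le_of_dvd (by norm_num) hdvd
    have hn1 : 1 ≤ n := Nat.pos_of_ne_zero hn0
    interval_cases n
    · exact absurd (d1_sq (e (f aa))) (hsq aa haa2)
    · exact absurd (d2_sq (e (f aa))) (hsq aa haa2)
    · exact absurd hdvd (by norm_num)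
    · have := d4_comm (e (f aa)) (e (f bb)) (hsq aa haa2) (hsq bb hbb2)
      apply hinj
      apply e.injective
      rw [map_mul, map_mul, map_mul, map_mul, this]

private lemma cancel_left {G : Type*} [Group G] {a b c : G} (haa : a * a = 1)
    (h : a * b = c) : b = a * c := by
  rw [← h, ← mul_assoc, haa, one_mul]

private lemma central_mul {G : Type*} [Group G] {a b : G}
    (ha : ∀ g : G, g * a = a * g) (hb : ∀ g : G, g * b = b * g) :
    ∀ g : G, g * (a * b) = (a * b) * g := fun g => by
  rw [← mul_assoc, ha g, mul_assoc, hb g, ← mul_assoc]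

private lemma comm_of_C {G : Type*} [Group G] {a b : G} (h : a⁻¹ * b⁻¹ * a * b = 1) :
    a * b = b * a := by
  calc a * b = (b * a) * (a⁻¹ * b⁻¹ * a * b) := by group
    _ = b * a := by rw [h, mul_one]

private lemma pair_class {H : Type*} [Group H] (hgood : IsGood H) (h4 : ∀ g : H, g ^ 4 = 1)
    (x y : H) (hx2 : ∀ g : H, g * x ^ 2 = x ^ 2 * g) (hy2 : ∀ g : H, g * y ^ 2 = y ^ 2 * g)
    (hx1 : x ^ 2 ≠ 1) (hy1 : y ^ 2 ≠ 1) (hne : x ^ 2 * y ^ 2 ≠ 1) :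
    x⁻¹ * y⁻¹ * x * y = 1 ∨ x⁻¹ * y⁻¹ * x * y = x ^ 2 ∨ x⁻¹ * y⁻¹ * x * y = y ^ 2 := by
  have hxx : x ^ 2 * x ^ 2 = 1 := by rw [← pow_add]; exact h4 x
  have hyy : y ^ 2 * y ^ 2 = 1 := by rw [← pow_add]; exact h4 y
  have hxy : x ^ 2 ≠ y ^ 2 := fun h => hne (by rw [h]; exact hyy)
  have hyn : y ^ 2 ∉ Subgroup.zpowers (x ^ 2) := by
    rw [mem_zpowers_sq hxx]
    push_neg
    exact ⟨hy1, fun hh => hxy hh.symm⟩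
  rcases LP hgood h4 x y hx2 hy2 hyn with h | h | h | h
  · exact Or.inl h
  · exact Or.inr (Or.inl h)
  · exact Or.inr (Or.inr h)
  · exfalso
    have hCc : ∀ g : H, g * (x⁻¹ * y⁻¹ * x * y) = (x⁻¹ * y⁻¹ * x * y) * g := by
      intro g; rw [h]; exact central_mul hx2 hy2 g
    have hw2 : (x * y) ^ 2 = 1 := by
      rw [sq_mul x y hCc, h, mul_inv_cancel]
    have hxm : x ∈ Subgroup.closure ({x * y, x} : Set H) := Subgroup.subset_closure (by simp)
    have hym : y ∈ Subgroup.closure ({x * y, x} : Set H) := by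
      have hmem : x⁻¹ * (x * y) ∈ Subgroup.closure ({x * y, x} : Set H) :=
        mul_mem (inv_mem hxm) (Subgroup.subset_closure (by simp))
      simpa using hmem
    have hcomm := LQ hgood h4 (x * y) x hw2 hxm hym hx1 hy1
    apply hne
    rw [← h]
    calc x⁻¹ * y⁻¹ * x * y = x⁻¹ * y⁻¹ * (x * y) := by group
      _ = x⁻¹ * y⁻¹ * (y * x) := by rw [hcomm]
      _ = 1 := by group

private lemma E1 {H : Type*} [Group H] (hgood : IsGood H) (h4 : ∀ g : H, g ^ 4 = 1)
    (y q z : H)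
    (hy2 : ∀ g : H, g * y ^ 2 = y ^ 2 * g) (hq2 : ∀ g : H, g * q ^ 2 = q ^ 2 * g)
    (hz2 : ∀ g : H, g * z ^ 2 = z ^ 2 * g)
    (hq1 : q ^ 2 ≠ 1) (hqy : q ^ 2 ≠ y ^ 2) (hqz : q ^ 2 ≠ z ^ 2)
    (hqyz : q ^ 2 ≠ y ^ 2 * z ^ 2) (hz1 : z ^ 2 ≠ 1) (hzy : z ^ 2 ≠ y ^ 2)
    (hCyq : y⁻¹ * q⁻¹ * y * q = q ^ 2) (hCzq : z⁻¹ * q⁻¹ * z * q = q ^ 2)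
    (hγ : y⁻¹ * z⁻¹ * y * z = 1 ∨ y⁻¹ * z⁻¹ * y * z = y ^ 2 ∨ y⁻¹ * z⁻¹ * y * z = z ^ 2) :
    False := by
  have hyy : y ^ 2 * y ^ 2 = 1 := by rw [← pow_add]; exact h4 y
  have hqq : q ^ 2 * q ^ 2 = 1 := by rw [← pow_add]; exact h4 q
  have hzz : z ^ 2 * z ^ 2 = 1 := by rw [← pow_add]; exact h4 z
  have hCyqc : ∀ g : H, g * (y⁻¹ * q⁻¹ * y * q) = (y⁻¹ * q⁻¹ * y * q) * g := by
    intro g; rw [hCyq]; exact hq2 g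
  have hu2 : (y * q) ^ 2 = y ^ 2 := by
    rw [sq_mul y q hCyqc, hCyq]
    exact mul_inv_cancel_right _ _
  have hu2c : ∀ g : H, g * (y * q) ^ 2 = (y * q) ^ 2 * g := by
    intro g; rw [hu2]; exact hy2 g
  have hvn : z ^ 2 ∉ Subgroup.zpowers ((y * q) ^ 2) := by
    rw [hu2, mem_zpowers_sq hyy]
    push_neg
    exact ⟨hz1, hzy⟩
  have hCqz : q⁻¹ * z⁻¹ * q * z = q ^ 2 := by
    have h1 : q⁻¹ * z⁻¹ * q * z = (z⁻¹ * q⁻¹ * z * q)⁻¹ := by group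
    rw [h1, hCzq]
    exact inv_eq_of_mul_eq_one_right hqq
  have hγc : ∀ g : H, g * (y⁻¹ * z⁻¹ * y * z) = (y⁻¹ * z⁻¹ * y * z) * g := by
    rcases hγ with h | h | h <;> intro g <;> rw [h]
    · rw [one_mul, mul_one]
    · exact hy2 g
    · exact hz2 g
  have hsplit : (y * q)⁻¹ * z⁻¹ * (y * q) * z = (y⁻¹ * z⁻¹ * y * z) * q ^ 2 := by
    rw [comm_mul_left y q z hγc, hCqz]
  rcases LP hgood h4 (y * q) z hu2c hz2 hvn with h | h | h | h <;> rw [hsplit] at h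
  · rcases hγ with hg | hg | hg <;> rw [hg] at h
    · rw [one_mul] at h; exact hq1 h
    · have := cancel_left hyy h; rw [mul_one] at this; exact hqy this
    · have := cancel_left hzz h; rw [mul_one] at this; exact hqz this
  · rw [hu2] at h
    rcases hγ with hg | hg | hg <;> rw [hg] at h
    · rw [one_mul] at h; exact hqy h
    · have := cancel_left hyy h; rw [hyy] at this; exact hq1 this
    · have := cancel_left hzz h; rw [hy2 (z ^ 2)] at this; exact hqyz this
  · rcases hγ with hg | hg | hg <;> rw [hg] at h
    · rw [one_mul] at h; exact hqz h
    · exact hqyz (cancel_left hyy h)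
    · have := cancel_left hzz h; rw [hzz] at this; exact hq1 this
  · rw [hu2] at h
    rcases hγ with hg | hg | hg <;> rw [hg] at h
    · rw [one_mul] at h; exact hqyz h
    · have := cancel_left hyy h
      rw [← mul_assoc, hyy, one_mul] at this
      exact hqz this
    · have := cancel_left hzz h
      rw [← mul_assoc, hy2 (z ^ 2), mul_assoc, hzz, mul_one] at this
      exact hqy this

private lemma E2 {H : Type*} [Group H] (hgood : IsGood H) (h4 : ∀ g : H, g ^ 4 = 1)
    (x y z : H)
    (hx2 : ∀ g : H, g * x ^ 2 = x ^ 2 * g) (hy2 : ∀ g : H, g * y ^ 2 = y ^ 2 * g)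
    (hz2 : ∀ g : H, g * z ^ 2 = z ^ 2 * g)
    (hy1 : y ^ 2 ≠ 1) (hz1 : z ^ 2 ≠ 1) (hyx : y ^ 2 ≠ x ^ 2) (hzy : z ^ 2 ≠ y ^ 2)
    (hzx : z ^ 2 ≠ x ^ 2) (hxyz : x ^ 2 ≠ y ^ 2 * z ^ 2)
    (hCxy : x⁻¹ * y⁻¹ * x * y = y ^ 2) (hCyz : y⁻¹ * z⁻¹ * y * z = z ^ 2)
    (hδ : x⁻¹ * z⁻¹ * x * z = 1 ∨ x⁻¹ * z⁻¹ * x * z = x ^ 2) : False := by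
  have hxx : x ^ 2 * x ^ 2 = 1 := by rw [← pow_add]; exact h4 x
  have hyy : y ^ 2 * y ^ 2 = 1 := by rw [← pow_add]; exact h4 y
  have hzz : z ^ 2 * z ^ 2 = 1 := by rw [← pow_add]; exact h4 z
  have hCxyc : ∀ g : H, g * (x⁻¹ * y⁻¹ * x * y) = (x⁻¹ * y⁻¹ * x * y) * g := by
    intro g; rw [hCxy]; exact hy2 g
  have hCyzc : ∀ g : H, g * (y⁻¹ * z⁻¹ * y * z) = (y⁻¹ * z⁻¹ * y * z) * g := by
    intro g; rw [hCyz]; exact hz2 g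
  have hδc : ∀ g : H, g * (x⁻¹ * z⁻¹ * x * z) = (x⁻¹ * z⁻¹ * x * z) * g := by
    rcases hδ with h | h <;> intro g <;> rw [h]
    · rw [one_mul, mul_one]
    · exact hx2 g
  have hu2 : (x * y) ^ 2 = x ^ 2 := by
    rw [sq_mul x y hCxyc, hCxy]
    exact mul_inv_cancel_right _ _
  have hv2 : (y * z) ^ 2 = y ^ 2 := by
    rw [sq_mul y z hCyzc, hCyz]
    exact mul_inv_cancel_right _ _
  have hu2c : ∀ g : H, g * (x * y) ^ 2 = (x * y) ^ 2 * g := by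
    intro g; rw [hu2]; exact hx2 g
  have hv2c : ∀ g : H, g * (y * z) ^ 2 = (y * z) ^ 2 * g := by
    intro g; rw [hv2]; exact hy2 g
  have hvn : (y * z) ^ 2 ∉ Subgroup.zpowers ((x * y) ^ 2) := by
    rw [hu2, hv2, mem_zpowers_sq hxx]
    push_neg
    exact ⟨hy1, hyx⟩
  have hCx_yz : x⁻¹ * (y * z)⁻¹ * x * (y * z) = y ^ 2 * (x⁻¹ * z⁻¹ * x * z) := by
    rw [comm_mul_right x y z hCxyc, hCxy]
  have hCyy : y⁻¹ * y⁻¹ * y * y = 1 := by group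
  have hCyyc : ∀ g : H, g * (y⁻¹ * y⁻¹ * y * y) = (y⁻¹ * y⁻¹ * y * y) * g := by
    intro g; rw [hCyy, one_mul, mul_one]
  have hCy_yz : y⁻¹ * (y * z)⁻¹ * y * (y * z) = z ^ 2 := by
    rw [comm_mul_right y y z hCyyc, hCyy, one_mul, hCyz]
  have hCx_yz_c : ∀ g : H, g * (x⁻¹ * (y * z)⁻¹ * x * (y * z)) =
      (x⁻¹ * (y * z)⁻¹ * x * (y * z)) * g := by
    intro g; rw [hCx_yz]; exact central_mul hy2 hδc g
  have hsplit : (x * y)⁻¹ * (y * z)⁻¹ * (x * y) * (y * z) =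
      y ^ 2 * (x⁻¹ * z⁻¹ * x * z) * z ^ 2 := by
    rw [comm_mul_left x y (y * z) hCx_yz_c, hCx_yz, hCy_yz]
  rcases LP hgood h4 (x * y) (y * z) hu2c hv2c hvn with h | h | h | h <;> rw [hsplit] at h
  · rcases hδ with hg | hg <;> rw [hg] at h
    · rw [mul_one] at h
      have := cancel_left hyy h; rw [mul_one] at this; exact hzy this
    · rw [mul_assoc] at h
      have h1 := cancel_left hyy h; rw [mul_one] at h1
      have h2 : x ^ 2 = y ^ 2 * z ^ 2 := by
        rw [← mul_one (x ^ 2), ← hzz, ← mul_assoc, h1]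
      exact hxyz h2
  · rw [hu2] at h
    rcases hδ with hg | hg <;> rw [hg] at h
    · rw [mul_one] at h; exact hxyz h.symm
    · rw [mul_assoc] at h
      have h1 := cancel_left hyy h
      rw [hx2 (y ^ 2)] at h1
      exact hzy (mul_left_cancel h1)
  · rw [hv2] at h
    rcases hδ with hg | hg <;> rw [hg] at h
    · rw [mul_one] at h
      have := cancel_left hyy h; rw [hyy] at this; exact hz1 this
    · rw [mul_assoc] at h
      have h1 := cancel_left hyy h; rw [hyy] at h1
      have h2 : x ^ 2 = z ^ 2 := by
        rw [← mul_one (x ^ 2), ← hzz, ← mul_assoc, h1, one_mul]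
      exact hzx h2.symm
  · rw [hu2, hv2] at h
    rcases hδ with hg | hg <;> rw [hg] at h
    · rw [mul_one] at h
      have h1 := cancel_left hyy h
      rw [← mul_assoc, hx2 (y ^ 2), mul_assoc, hyy, mul_one] at h1
      exact hzx h1
    · rw [mul_assoc] at h
      have h1 := cancel_left hyy h
      rw [← mul_assoc, hx2 (y ^ 2), mul_assoc, hyy, mul_one] at h1
      have h2 : x ^ 2 * z ^ 2 = x ^ 2 * 1 := by rw [mul_one]; exact h1
      exact hz1 (mul_left_cancel h2)

private lemma E3 {H : Type*} [Group H] (hgood : IsGood H) (h4 : ∀ g : H, g ^ 4 = 1)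
    (y q z : H)
    (hy2 : ∀ g : H, g * y ^ 2 = y ^ 2 * g) (hq2 : ∀ g : H, g * q ^ 2 = q ^ 2 * g)
    (hz2 : ∀ g : H, g * z ^ 2 = z ^ 2 * g)
    (hq1 : q ^ 2 ≠ 1) (hqy : q ^ 2 ≠ y ^ 2) (hz1 : z ^ 2 ≠ 1) (hzy : z ^ 2 ≠ y ^ 2)
    (hqz1 : q ^ 2 * z ^ 2 ≠ 1) (hqzy : q ^ 2 * z ^ 2 ≠ y ^ 2)
    (hCyq : y⁻¹ * q⁻¹ * y * q = q ^ 2) (hCyz : y⁻¹ * z⁻¹ * y * z = 1)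
    (hCqz : q⁻¹ * z⁻¹ * q * z = 1) : False := by
  have hyy : y ^ 2 * y ^ 2 = 1 := by rw [← pow_add]; exact h4 y
  have hCqzc : ∀ g : H, g * (q⁻¹ * z⁻¹ * q * z) = (q⁻¹ * z⁻¹ * q * z) * g := by
    intro g; rw [hCqz, one_mul, mul_one]
  have hv2 : (q * z) ^ 2 = q ^ 2 * z ^ 2 := by
    rw [sq_mul q z hCqzc, hCqz, inv_one, mul_one]
  have hv2c : ∀ g : H, g * (q * z) ^ 2 = (q * z) ^ 2 * g := by
    intro g; rw [hv2]; exact central_mul hq2 hz2 g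
  have hvn : (q * z) ^ 2 ∉ Subgroup.zpowers (y ^ 2) := by
    rw [hv2, mem_zpowers_sq hyy]
    push_neg
    exact ⟨hqz1, hqzy⟩
  have hCyqc : ∀ g : H, g * (y⁻¹ * q⁻¹ * y * q) = (y⁻¹ * q⁻¹ * y * q) * g := by
    intro g; rw [hCyq]; exact hq2 g
  have hsplit : y⁻¹ * (q * z)⁻¹ * y * (q * z) = q ^ 2 := by
    rw [comm_mul_right y q z hCyqc, hCyq, hCyz, mul_one]
  rcases LP hgood h4 y (q * z) hy2 hv2c hvn with h | h | h | h <;> rw [hsplit] at h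
  · exact hq1 h
  · exact hqy h
  · rw [hv2] at h
    have h2 : q ^ 2 * z ^ 2 = q ^ 2 * 1 := by rw [mul_one]; exact h.symm
    exact hz1 (mul_left_cancel h2)
  · rw [hv2] at h
    have h1 : y ^ 2 * q ^ 2 = q ^ 2 * z ^ 2 := by
      conv_lhs => rw [h]
      rw [← mul_assoc, hyy, one_mul]
    rw [← hy2 (q ^ 2)] at h1
    exact hzy (mul_left_cancel h1).symm

set_option maxHeartbeats 2000000 in
/-- **Lemma 4.10**: let `H` be a good group of exponent 4 and `X` a subset such that
`Φ(H)` is the internal direct product of the subgroups `⟨x²⟩` (`x ∈ X`), each `x²`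
nontrivial. Then either `⟨X⟩` is abelian, or all but one of the elements of `X` commute
with each other and are inverted by the remaining one. -/
theorem good_exponent_four_basis (H : Type*) [Group H] (hgood : IsGood H)
    (hexp : Monoid.exponent H = 4) (X : Set H) (hnt : ∀ x ∈ X, x ^ 2 ≠ 1)
    (hindep : iSupIndep (fun x : X => Subgroup.zpowers ((x : H) ^ 2)))
    (hsup : (⨆ x : X, Subgroup.zpowers ((x : H) ^ 2)) = frattini H) :
    (∀ a ∈ Subgroup.closure X, ∀ b ∈ Subgroup.closure X, a * b = b * a) ∨
    (∃ y ∈ X, (∀ a ∈ X, a ≠ y → ∀ b ∈ X, b ≠ y → a * b = b * a) ∧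
      ∀ a ∈ X, a ≠ y → y⁻¹ * a * y = a⁻¹) := by
  have h4 : ∀ g : H, g ^ 4 = 1 := by
    intro g; rw [← hexp]; exact Monoid.pow_exponent_eq_one g
  have hsq2 : ∀ x : H, x ^ 2 * x ^ 2 = 1 := fun x => by rw [← pow_add]; exact h4 x
  have hcen : ∀ x ∈ X, ∀ g : H, g * x ^ 2 = x ^ 2 * g := by
    intro x hx
    obtain ⟨hn, -⟩ := hgood.2 x x
    exact central_of_normal_sq (hsq2 x) hn
  have hkey : ∀ (x : H) (hx : x ∈ X) (g : H),
      g ∈ (⨆ (j : X) (_ : j ≠ (⟨x, hx⟩ : X)), Subgroup.zpowers ((j : H) ^ 2)) → x ^ 2 ≠ g := by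
    intro x hx g hg he
    have hd := iSupIndep_def.mp hindep ⟨x, hx⟩
    have h1 : x ^ 2 ∈ Subgroup.zpowers (((⟨x, hx⟩ : X) : H) ^ 2) := Subgroup.mem_zpowers _
    have h2 : x ^ 2 ∈ (⨆ (j : X) (_ : j ≠ (⟨x, hx⟩ : X)), Subgroup.zpowers ((j : H) ^ 2)) := by
      rw [he]; exact hg
    exact hnt x hx (Subgroup.disjoint_def.mp hd h1 h2)
  have hmemS : ∀ (x : H) (hx : x ∈ X) (y : H), y ∈ X → y ≠ x →
      y ^ 2 ∈ (⨆ (j : X) (_ : j ≠ (⟨x, hx⟩ : X)), Subgroup.zpowers ((j : H) ^ 2)) := by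
    intro x hx y hy hne
    have hj : (⟨y, hy⟩ : X) ≠ ⟨x, hx⟩ := fun h => hne (congrArg Subtype.val h)
    have hle : Subgroup.zpowers (y ^ 2) ≤
        ⨆ (j : X) (_ : j ≠ (⟨x, hx⟩ : X)), Subgroup.zpowers ((j : H) ^ 2) :=
      le_iSup₂ (f := fun (j : X) (_ : j ≠ (⟨x, hx⟩ : X)) =>
        Subgroup.zpowers ((j : H) ^ 2)) ⟨y, hy⟩ hj
    exact hle (Subgroup.mem_zpowers _)
  have hne2 : ∀ x ∈ X, ∀ y ∈ X, y ≠ x → x ^ 2 ≠ y ^ 2 :=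
    fun x hx y hy hne => hkey x hx _ (hmemS x hx y hy hne)
  have hne3 : ∀ x ∈ X, ∀ y ∈ X, ∀ z ∈ X, y ≠ x → z ≠ x → x ^ 2 ≠ y ^ 2 * z ^ 2 :=
    fun x hx y hy z hz h1 h2 =>
      hkey x hx _ (mul_mem (hmemS x hx y hy h1) (hmemS x hx z hz h2))
  have hprod1 : ∀ x ∈ X, ∀ y ∈ X, y ≠ x → x ^ 2 * y ^ 2 ≠ 1 := by
    intro x hx y hy hne h
    apply hne2 x hx y hy hne
    rw [← mul_one (x ^ 2), ← hsq2 y, ← mul_assoc, h, one_mul]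
  have hclass : ∀ x ∈ X, ∀ y ∈ X, x ≠ y →
      (x⁻¹ * y⁻¹ * x * y = 1 ∨ x⁻¹ * y⁻¹ * x * y = x ^ 2 ∨ x⁻¹ * y⁻¹ * x * y = y ^ 2) :=
    fun x hx y hy hne =>
      pair_class hgood h4 x y (hcen x hx) (hcen y hy) (hnt x hx) (hnt y hy)
        (hprod1 x hx y hy (Ne.symm hne))
  by_cases hcomm : ∀ x ∈ X, ∀ y ∈ X, x * y = y * x
  · left
    have step1 : ∀ g ∈ X, ∀ c ∈ Subgroup.closure X, g * c = c * g := by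
      intro g hg c hc
      induction hc using Subgroup.closure_induction with
      | mem z hz => exact hcomm g hg z hz
      | one => rw [mul_one, one_mul]
      | mul z w hz hw ihz ihw => rw [← mul_assoc, ihz, mul_assoc, ihw, ← mul_assoc]
      | inv z hz ih =>
        calc g * z⁻¹ = z⁻¹ * (z * g) * z⁻¹ := by group
          _ = z⁻¹ * (g * z) * z⁻¹ := by rw [ih]
          _ = z⁻¹ * g := by group
    intro a ha b hb
    induction ha using Subgroup.closure_induction with
    | mem z hz => exact step1 z hz b hb
    | one => rw [mul_one, one_mul]
    | mul z w hz hw ihz ihw => rw [mul_assoc, ihw, ← mul_assoc, ihz, mul_assoc]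
    | inv z hz ih =>
      calc z⁻¹ * b = z⁻¹ * (b * z) * z⁻¹ := by group
        _ = z⁻¹ * (z * b) * z⁻¹ := by rw [← ih]
        _ = b * z⁻¹ := by group
  · right
    push_neg at hcomm
    obtain ⟨x, hx, y, hy, hxyne⟩ := hcomm
    have hxny : x ≠ y := fun h => hxyne (by rw [h])
    obtain ⟨y₀, hy₀, q, hq, hy₀q, hmain⟩ :
        ∃ y₀, y₀ ∈ X ∧ ∃ q, q ∈ X ∧ y₀ ≠ q ∧ y₀⁻¹ * q⁻¹ * y₀ * q = q ^ 2 := by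
      rcases hclass x hx y hy hxny with h | h | h
      · exact absurd (comm_of_C h) hxyne
      · refine ⟨y, hy, x, hx, Ne.symm hxny, ?_⟩
        have h1 : y⁻¹ * x⁻¹ * y * x = (x⁻¹ * y⁻¹ * x * y)⁻¹ := by group
        rw [h1, h]
        exact inv_eq_of_mul_eq_one_right (hsq2 x)
      · exact ⟨x, hx, y, hy, hxny, h⟩
    have hinv : ∀ a ∈ X, a ≠ y₀ → y₀⁻¹ * a⁻¹ * y₀ * a = a ^ 2 := by
      intro a ha hane
      by_cases haq : a = q
      · subst haq; exact hmain
      · rcases hclass y₀ hy₀ a ha (Ne.symm hane) with h | h | h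
        · exfalso
          rcases hclass a ha q hq haq with h2 | h2 | h2
          · have hCqa : q⁻¹ * a⁻¹ * q * a = 1 := by
              have hg : q⁻¹ * a⁻¹ * q * a = (a⁻¹ * q⁻¹ * a * q)⁻¹ := by group
              rw [hg, h2, inv_one]
            exact E3 hgood h4 y₀ q a (hcen y₀ hy₀) (hcen q hq) (hcen a ha)
              (hnt q hq) (hne2 q hq y₀ hy₀ hy₀q)
              (hnt a ha) (hne2 a ha y₀ hy₀ (Ne.symm hane))
              (hprod1 q hq a ha haq)
              (Ne.symm (hne3 y₀ hy₀ q hq a ha (Ne.symm hy₀q) hane))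
              hmain h hCqa
          · have hCqa : q⁻¹ * a⁻¹ * q * a = a ^ 2 := by
              have hg : q⁻¹ * a⁻¹ * q * a = (a⁻¹ * q⁻¹ * a * q)⁻¹ := by group
              rw [hg, h2]
              exact inv_eq_of_mul_eq_one_right (hsq2 a)
            exact E2 hgood h4 y₀ q a (hcen y₀ hy₀) (hcen q hq) (hcen a ha)
              (hnt q hq) (hnt a ha)
              (hne2 q hq y₀ hy₀ hy₀q)
              (hne2 a ha q hq (Ne.symm haq))
              (hne2 a ha y₀ hy₀ (Ne.symm hane))
              (hne3 y₀ hy₀ q hq a ha (Ne.symm hy₀q) hane)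
              hmain hCqa (Or.inl h)
          · exact E1 hgood h4 y₀ q a (hcen y₀ hy₀) (hcen q hq) (hcen a ha)
              (hnt q hq)
              (hne2 q hq y₀ hy₀ hy₀q)
              (hne2 q hq a ha haq)
              (hne3 q hq y₀ hy₀ a ha hy₀q haq)
              (hnt a ha)
              (hne2 a ha y₀ hy₀ (Ne.symm hane))
              hmain h2 (hclass y₀ hy₀ a ha (Ne.symm hane))
        · exfalso
          have hCay : a⁻¹ * y₀⁻¹ * a * y₀ = y₀ ^ 2 := by
            have hg : a⁻¹ * y₀⁻¹ * a * y₀ = (y₀⁻¹ * a⁻¹ * y₀ * a)⁻¹ := by group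
            rw [hg, h]
            exact inv_eq_of_mul_eq_one_right (hsq2 y₀)
          have hδ : a⁻¹ * q⁻¹ * a * q = 1 ∨ a⁻¹ * q⁻¹ * a * q = a ^ 2 := by
            rcases hclass a ha q hq haq with h2 | h2 | h2
            · exact Or.inl h2
            · exact Or.inr h2
            · exact (E1 hgood h4 y₀ q a (hcen y₀ hy₀) (hcen q hq) (hcen a ha)
                (hnt q hq)
                (hne2 q hq y₀ hy₀ hy₀q)
                (hne2 q hq a ha haq)
                (hne3 q hq y₀ hy₀ a ha hy₀q haq)
                (hnt a ha)
                (hne2 a ha y₀ hy₀ (Ne.symm hane))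
                hmain h2 (hclass y₀ hy₀ a ha (Ne.symm hane))).elim
          exact E2 hgood h4 a y₀ q (hcen a ha) (hcen y₀ hy₀) (hcen q hq)
            (hnt y₀ hy₀) (hnt q hq)
            (hne2 y₀ hy₀ a ha hane)
            (hne2 q hq y₀ hy₀ hy₀q)
            (hne2 q hq a ha haq)
            (hne3 a ha y₀ hy₀ q hq (Ne.symm hane) (Ne.symm haq))
            hCay hmain hδ
        · exact h
    have hcommrest : ∀ a ∈ X, a ≠ y₀ → ∀ b ∈ X, b ≠ y₀ → a * b = b * a := by
      intro a ha hay b hb hby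
      by_cases hab : a = b
      · rw [hab]
      · rcases hclass a ha b hb hab with h | h | h
        · exact comm_of_C h
        · exfalso
          have hCba : b⁻¹ * a⁻¹ * b * a = a ^ 2 := by
            have hg : b⁻¹ * a⁻¹ * b * a = (a⁻¹ * b⁻¹ * a * b)⁻¹ := by group
            rw [hg, h]
            exact inv_eq_of_mul_eq_one_right (hsq2 a)
          exact E1 hgood h4 y₀ a b (hcen y₀ hy₀) (hcen a ha) (hcen b hb)
            (hnt a ha)
            (hne2 a ha y₀ hy₀ (Ne.symm hay))
            (hne2 a ha b hb (Ne.symm hab))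
            (hne3 a ha y₀ hy₀ b hb (Ne.symm hay) (Ne.symm hab))
            (hnt b hb)
            (hne2 b hb y₀ hy₀ (Ne.symm hby))
            (hinv a ha hay) hCba (hclass y₀ hy₀ b hb (Ne.symm hby))
        · exfalso
          exact E1 hgood h4 y₀ b a (hcen y₀ hy₀) (hcen b hb) (hcen a ha)
            (hnt b hb)
            (hne2 b hb y₀ hy₀ (Ne.symm hby))
            (hne2 b hb a ha hab)
            (hne3 b hb y₀ hy₀ a ha (Ne.symm hby) hab)
            (hnt a ha)
            (hne2 a ha y₀ hy₀ (Ne.symm hay))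
            (hinv b hb hby) h (hclass y₀ hy₀ a ha (Ne.symm hay))
    refine ⟨y₀, hy₀, hcommrest, ?_⟩
    intro a ha hane
    have h := hinv a ha hane
    rw [pow_two] at h
    have h1 : y₀⁻¹ * a⁻¹ * y₀ = a := by
      calc y₀⁻¹ * a⁻¹ * y₀ = y₀⁻¹ * a⁻¹ * y₀ * a * a⁻¹ := by group
        _ = a * a * a⁻¹ := by rw [h]
        _ = a := by group
    calc y₀⁻¹ * a * y₀ = (y₀⁻¹ * a⁻¹ * y₀)⁻¹ := by group
      _ = a⁻¹ := by rw [h1]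
end

section
/- If H is a nonabelian good group of exponent 4, then the Frattini subgroup of the centre of H has order at most 2. -/
open scoped commutatorElement

lemma aux_d1fact : ∀ p q : DihedralGroup 1, ⁅p, q⁆ = 1 := by decide

lemma aux_d2fact : ∀ p q : DihedralGroup 2, ⁅p, q⁆ = 1 := by decide

lemma aux_d4fact : ∀ p q : DihedralGroup 4, ⁅p, q⁆ = 1 ∨ q ^ 2 = 1 ∨ q ^ 2 = ⁅p, q⁆ := by
  decide

section Aux

variable {H : Type*} [Group H]

lemma aux_mem_zpowers_sq_one {s : H} (hs : s ^ 2 = 1) {x : H}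
    (hx : x ∈ Subgroup.zpowers s) : x = 1 ∨ x = s := by
  obtain ⟨k, hk⟩ := Subgroup.mem_zpowers_iff.mp hx
  have hs2 : s ^ (2 : ℤ) = 1 := by
    rw [show (2 : ℤ) = ((2 : ℕ) : ℤ) from rfl, zpow_natCast, hs]
  rcases Int.even_or_odd k with ⟨m, hm⟩ | ⟨m, hm⟩
  · left; rw [← hk, hm, ← two_mul, zpow_mul, hs2, one_zpow]
  · right; rw [← hk, hm, zpow_add, zpow_mul, hs2, one_zpow, one_mul, zpow_one]

lemma aux_comm_left {t : H} (ht : ∀ k, t * k = k * t) (x h : H) : ⁅x * t, h⁆ = ⁅x, h⁆ := by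
  calc x * t * h * (x * t)⁻¹ * h⁻¹ = x * (t * h) * t⁻¹ * x⁻¹ * h⁻¹ := by group
  _ = x * (h * t) * t⁻¹ * x⁻¹ * h⁻¹ := by rw [ht h]
  _ = ⁅x, h⁆ := by rw [commutatorElement_def]; group

lemma aux_comm_right {t : H} (ht : ∀ k, t * k = k * t) (g y : H) : ⁅g, y * t⁆ = ⁅g, y⁆ := by
  calc g * (y * t) * g⁻¹ * (y * t)⁻¹ = g * y * (t * g⁻¹) * t⁻¹ * y⁻¹ := by group
  _ = g * y * (g⁻¹ * t) * t⁻¹ * y⁻¹ := by rw [ht g⁻¹]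
  _ = ⁅g, y⁆ := by rw [commutatorElement_def]; group

lemma aux_sq_mul_central {t : H} (ht : ∀ k, t * k = k * t) (x : H) :
    (x * t) ^ 2 = x ^ 2 * t ^ 2 := by
  rw [pow_two, pow_two, pow_two]
  calc x * t * (x * t) = x * (t * x) * t := by group
  _ = x * (x * t) * t := by rw [ht x]
  _ = x * x * (t * t) := by group

lemma aux_sq_central (hgood : IsGood H) (h4 : ∀ x : H, x ^ 4 = 1) (g : H) :
    ∀ k, g ^ 2 * k = k * g ^ 2 := by
  obtain ⟨hn, -⟩ := hgood.2 g g
  intro k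
  have hmem : k * g ^ 2 * k⁻¹ ∈ Subgroup.zpowers (g ^ 2) :=
    hn.conj_mem _ (Subgroup.mem_zpowers _) k
  have hsq : (g ^ 2) ^ 2 = 1 := by rw [← pow_mul]; exact h4 g
  rcases aux_mem_zpowers_sq_one hsq hmem with h | h
  · have h3 : g ^ 2 = 1 := by
      calc g ^ 2 = k⁻¹ * (k * g ^ 2 * k⁻¹) * k := by group
      _ = k⁻¹ * 1 * k := by rw [h]
      _ = 1 := by group
    simp [h3]
  · calc g ^ 2 * k = k * g ^ 2 * k⁻¹ * k := by rw [h]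
    _ = k * g ^ 2 := by group

lemma aux_comm_sq_one (hcen : ∀ g k : H, g ^ 2 * k = k * g ^ 2) (h4 : ∀ x : H, x ^ 4 = 1)
    (x y : H) : ⁅x, y⁆ * ⁅x, y⁆ = 1 := by
  have h1 : ⁅x, y⁆ * y ^ 2 = x ^ 2 * (x⁻¹ * y) ^ 2 := by
    rw [commutatorElement_def, pow_two, pow_two, pow_two]; group
  have hid : ⁅x, y⁆ = x ^ 2 * (x⁻¹ * y) ^ 2 * (y ^ 2)⁻¹ := eq_mul_inv_of_mul_eq h1
  have c1 : Commute (x ^ 2) ((x⁻¹ * y) ^ 2) := hcen x _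
  have cy : ∀ k : H, Commute (y ^ 2) k := fun k => hcen y k
  have c2 : Commute (x ^ 2 * (x⁻¹ * y) ^ 2) ((y ^ 2)⁻¹) := ((cy _).symm).inv_right
  have hgoal : (x ^ 2 * (x⁻¹ * y) ^ 2 * (y ^ 2)⁻¹) ^ 2 = 1 := by
    rw [c2.mul_pow, c1.mul_pow, ← pow_mul, ← pow_mul, inv_pow, ← pow_mul]
    norm_num
    simp [h4]
  rw [← pow_two, hid]
  exact hgoal

lemma aux_key (hgood : IsGood H) (h4 : ∀ x : H, x ^ 4 = 1)
    (g h : H) (hc1 : ⁅g, h⁆ ≠ 1) (hcg : ⁅g, h⁆ ≠ g ^ 2) :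
    h ^ 2 = 1 ∨ h ^ 2 = g ^ 2 ∨ h ^ 2 = ⁅g, h⁆ ∨ h ^ 2 = ⁅g, h⁆ * g ^ 2 := by
  obtain ⟨hn, hcase⟩ := hgood.2 g h
  haveI := hn.subgroupOf (Subgroup.closure {g, h})
  have hg1 : g ∈ Subgroup.closure ({g, h} : Set H) :=
    Subgroup.subset_closure (Set.mem_insert _ _)
  have hh1 : h ∈ Subgroup.closure ({g, h} : Set H) :=
    Subgroup.subset_closure (Set.mem_insert_of_mem _ rfl)
  set G₁ := Subgroup.closure ({g, h} : Set H) with hG₁def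
  set N := (Subgroup.zpowers (g ^ 2)).subgroupOf G₁ with hNdef
  set gg : ↥G₁ := ⟨g, hg1⟩ with hggdef
  set hh : ↥G₁ := ⟨h, hh1⟩ with hhhdef
  set φ : ↥G₁ →* ↥G₁ ⧸ N := QuotientGroup.mk' N with hφdef
  have hsq : (g ^ 2) ^ 2 = 1 := by rw [← pow_mul]; exact h4 g
  have hzp : ∀ x : H, x ∈ Subgroup.zpowers (g ^ 2) → x = 1 ∨ x = g ^ 2 := fun x hx =>
    aux_mem_zpowers_sq_one hsq hx
  have hker : ∀ x : ↥G₁, φ x = 1 ↔ (x : H) ∈ Subgroup.zpowers (g ^ 2) := fun x =>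
    (QuotientGroup.eq_one_iff x).trans Subgroup.mem_subgroupOf
  have hcoe : ((⁅gg, hh⁆ : ↥G₁) : H) = ⁅g, h⁆ := rfl
  have hcb : ⁅φ gg, φ hh⁆ ≠ 1 := by
    intro heq
    rw [← map_commutatorElement] at heq
    rw [hker, hcoe] at heq
    rcases hzp _ heq with h1 | h1
    · exact hc1 h1
    · exact hcg h1
  have main : φ hh ^ 2 = 1 ∨ φ hh ^ 2 = ⁅φ gg, φ hh⁆ := by
    rcases hcase with habel | ⟨n, hn0, ⟨e⟩⟩
    · exact absurd (commutatorElement_eq_one_iff_commute.mpr (habel _ _)) hcb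
    · have hQ4 : ∀ q : ↥G₁ ⧸ N, q ^ 4 = 1 := by
        refine fun q => QuotientGroup.induction_on q (fun x => ?_)
        have hx4 : x ^ 4 = 1 := Subtype.ext (by simpa using h4 (x : H))
        have hφx := congrArg φ hx4
        exact (by simpa [map_pow] using hφx : φ x ^ 4 = 1)
      have hd4 : ∀ d : DihedralGroup n, d ^ 4 = 1 := by
        intro d
        have h1 := hQ4 (e.symm d)
        have h2 := congrArg e h1
        simpa [map_pow] using h2
      have hdvd : n ∣ 4 := by
        haveI : NeZero n := ⟨hn0⟩
        have h1 := hd4 (DihedralGroup.r 1)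
        rw [DihedralGroup.r_one_pow, DihedralGroup.one_def] at h1
        have h2 : ((4 : ℕ) : ZMod n) = 0 := DihedralGroup.r.inj h1
        exact (ZMod.natCast_eq_zero_iff 4 n).mp h2
      have hn14 : n = 1 ∨ n = 2 ∨ n = 4 := by
        have hp : 1 ≤ n := Nat.pos_of_ne_zero hn0
        have hle : n ≤ 4 := Nat.le_of_dvd (by norm_num) hdvd
        interval_cases n <;> revert hdvd <;> decide
      rcases hn14 with rfl | rfl | rfl
      · exfalso
        apply hcb
        have h1 := aux_d1fact (e (φ gg)) (e (φ hh))
        rw [← map_commutatorElement] at h1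
        exact e.injective (by rw [h1, map_one])
      · exfalso
        apply hcb
        have h1 := aux_d2fact (e (φ gg)) (e (φ hh))
        rw [← map_commutatorElement] at h1
        exact e.injective (by rw [h1, map_one])
      · rcases aux_d4fact (e (φ gg)) (e (φ hh)) with h1 | h1 | h1
        · exfalso
          apply hcb
          rw [← map_commutatorElement] at h1
          exact e.injective (by rw [h1, map_one])
        · left
          exact e.injective (by rw [map_pow, h1, map_one])
        · right
          exact e.injective (by rw [map_pow, map_commutatorElement]; exact h1)
  rcases main with h1 | h1
  · have h2 : φ (hh ^ 2) = 1 := by rw [map_pow]; exact h1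
    have h3 : ((hh ^ 2 : ↥G₁) : H) ∈ Subgroup.zpowers (g ^ 2) := (hker _).mp h2
    have h4' : (h : H) ^ 2 ∈ Subgroup.zpowers (g ^ 2) := h3
    rcases hzp _ h4' with h5 | h5
    · exact Or.inl h5
    · exact Or.inr (Or.inl h5)
  · have h2 : φ ((hh ^ 2)⁻¹ * ⁅gg, hh⁆) = 1 := by
      rw [map_mul, map_inv, map_pow, map_commutatorElement, h1, inv_mul_cancel]
    have h3 : (((hh ^ 2)⁻¹ * ⁅gg, hh⁆ : ↥G₁) : H) ∈ Subgroup.zpowers (g ^ 2) := (hker _).mp h2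
    have h4' : ((h : H) ^ 2)⁻¹ * ⁅g, h⁆ ∈ Subgroup.zpowers (g ^ 2) := h3
    rcases hzp _ h4' with h5 | h5
    · right; right; left
      exact inv_mul_eq_one.mp h5
    · right; right; right
      have h6 : h ^ 2 = ⁅g, h⁆ * (g ^ 2)⁻¹ := by
        rw [← h5]; group
      have hinv : (g ^ 2)⁻¹ = g ^ 2 := by
        apply inv_eq_of_mul_eq_one_right
        rw [← pow_two]; exact hsq
      rw [h6, hinv]

lemma aux_sq_unique (hgood : IsGood H) (h4 : ∀ x : H, x ^ 4 = 1)
    (hna : ¬ ∀ a b : H, a * b = b * a) :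
    ∀ z w : H, (∀ k, z * k = k * z) → (∀ k, w * k = k * w) →
      z ^ 2 ≠ 1 → w ^ 2 ≠ 1 → z ^ 2 = w ^ 2 := by
  have hcen : ∀ g k : H, g ^ 2 * k = k * g ^ 2 := aux_sq_central hgood h4
  intro z w hz hw hz2 hw2
  by_contra hneq
  push_neg at hna
  obtain ⟨x, y, hxy⟩ := hna
  set u := x ^ 2 with hudef
  set c := ⁅x, y⁆ with hcdef
  have hc1 : c ≠ 1 := fun hcc => hxy (commutatorElement_eq_one_iff_commute.mp hcc)
  have hcsq : c * c = 1 := aux_comm_sq_one hcen h4 x y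
  have hzw : ∀ k, (z * w) * k = k * (z * w) := fun k => by
    rw [mul_assoc, hw k, ← mul_assoc, hz k, mul_assoc]
  have h1c : ∀ k : H, (1 : H) * k = k * 1 := by simp
  have ha2 : z ^ 2 * z ^ 2 = 1 := by rw [← pow_add]; exact h4 z
  set a := z ^ 2 with hadef
  set b := w ^ 2 with hbdef
  have hab : a ≠ b := hneq
  have hzwsq : (z * w) ^ 2 = a * b := aux_sq_mul_central hw z
  have hainv : a⁻¹ = a := inv_eq_of_mul_eq_one_right ha2
  have habne1 : a * b ≠ 1 := by
    intro hcon
    apply hab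
    exact ((eq_inv_of_mul_eq_one_right hcon).trans hainv).symm
  have hprod_a : a * b = a → False := fun hcon =>
    hw2 (mul_left_cancel (hcon.trans (mul_one a).symm))
  have hprod_b : a * b = b → False := fun hcon =>
    hz2 (mul_right_cancel (hcon.trans (one_mul b).symm))
  -- the predicate "p is the square of a central element"
  have hP1 : ∃ t : H, (∀ k, t * k = k * t) ∧ t ^ 2 = 1 := ⟨1, h1c, one_pow 2⟩
  have hPa : ∃ t : H, (∀ k, t * k = k * t) ∧ t ^ 2 = a := ⟨z, hz, rfl⟩
  have hPb : ∃ t : H, (∀ k, t * k = k * t) ∧ t ^ 2 = b := ⟨w, hw, rfl⟩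
  have hPab : ∃ t : H, (∀ k, t * k = k * t) ∧ t ^ 2 = a * b := ⟨z * w, hzw, hzwsq⟩
  -- selection of two suitable candidates
  have hsel : ∃ p₁ p₂ : H,
      (∃ t : H, (∀ k, t * k = k * t) ∧ t ^ 2 = p₁) ∧
      (∃ t : H, (∀ k, t * k = k * t) ∧ t ^ 2 = p₂) ∧
      u * p₁ ≠ c ∧ u * p₂ ≠ c ∧ u * p₂ ≠ u * p₁ ∧ u * p₂ ≠ c * (u * p₁) := by
    by_cases h1 : u * 1 = c
    · have hane : u * a ≠ c := fun hcon => hz2 (mul_left_cancel (hcon.trans h1.symm))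
      have hbne : u * b ≠ c := fun hcon => hw2 (mul_left_cancel (hcon.trans h1.symm))
      have habne : u * (a * b) ≠ c := fun hcon =>
        habne1 (mul_left_cancel (hcon.trans h1.symm))
      by_cases h2 : u * b = c * (u * a)
      · refine ⟨a, a * b, hPa, hPab, hane, habne, ?_, ?_⟩
        · intro hcon; exact hprod_a (mul_left_cancel hcon)
        · intro hcon; rw [← h2] at hcon; exact hprod_b (mul_left_cancel hcon)
      · refine ⟨a, b, hPa, hPb, hane, hbne, ?_, h2⟩
        intro hcon; exact hab (mul_left_cancel hcon).symm
    · by_cases h2 : u * a ≠ c ∧ u * a ≠ c * (u * 1)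
      · refine ⟨1, a, hP1, hPa, h1, h2.1, ?_, h2.2⟩
        intro hcon; exact hz2 (mul_left_cancel hcon)
      · by_cases h3 : u * b ≠ c ∧ u * b ≠ c * (u * 1)
        · refine ⟨1, b, hP1, hPb, h1, h3.1, ?_, h3.2⟩
          intro hcon; exact hw2 (mul_left_cancel hcon)
        · push_neg at h2 h3
          have h2' : u * a = c ∨ u * a = c * (u * 1) := by
            rcases eq_or_ne (u * a) c with h | h
            · exact Or.inl h
            · exact Or.inr (h2 h)
          have h3' : u * b = c ∨ u * b = c * (u * 1) := by
            rcases eq_or_ne (u * b) c with h | h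
            · exact Or.inl h
            · exact Or.inr (h3 h)
          refine ⟨1, a * b, hP1, hPab, h1, ?_, ?_, ?_⟩
          · intro hcon
            rcases h2' with ha' | ha' <;> rcases h3' with hb' | hb'
            · exact hab (mul_left_cancel (ha'.trans hb'.symm))
            · exact hprod_a (mul_left_cancel (hcon.trans ha'.symm))
            · exact hprod_b (mul_left_cancel (hcon.trans hb'.symm))
            · exact hab (mul_left_cancel (ha'.trans hb'.symm))
          · intro hcon; exact habne1 (mul_left_cancel hcon)
          · intro hcon
            rcases h2' with ha' | ha' <;> rcases h3' with hb' | hb'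
            · exact hab (mul_left_cancel (ha'.trans hb'.symm))
            · exact hprod_b (mul_left_cancel (hcon.trans hb'.symm))
            · exact hprod_a (mul_left_cancel (hcon.trans ha'.symm))
            · exact hab (mul_left_cancel (ha'.trans hb'.symm))
  obtain ⟨p₁, p₂, ⟨t₁, ht₁, hp₁⟩, ⟨t₂, ht₂, hp₂⟩, hc₁, hc₂, hne, hnec⟩ := hsel
  have hs₁ : (x * t₁) ^ 2 = u * p₁ := by rw [aux_sq_mul_central ht₁, hp₁]
  have hs₂ : (x * t₂) ^ 2 = u * p₂ := by rw [aux_sq_mul_central ht₂, hp₂]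
  have happ : ∀ h' : H, ⁅x, h'⁆ = c → h' ^ 2 = 1 ∨ h' ^ 2 = c := by
    intro h' hch'
    have hcomm1 : ⁅x * t₁, h'⁆ = c := by rw [aux_comm_left ht₁, hch']
    have hcomm2 : ⁅x * t₂, h'⁆ = c := by rw [aux_comm_left ht₂, hch']
    have k1 := aux_key hgood h4 (x * t₁) h'
      (by rw [hcomm1]; exact hc1) (by rw [hcomm1, hs₁]; exact hc₁.symm)
    have k2 := aux_key hgood h4 (x * t₂) h'
      (by rw [hcomm2]; exact hc1) (by rw [hcomm2, hs₂]; exact hc₂.symm)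
    rw [hcomm1, hs₁] at k1
    rw [hcomm2, hs₂] at k2
    rcases k1 with e1 | e1 | e1 | e1
    · exact Or.inl e1
    · rcases k2 with e2 | e2 | e2 | e2
      · exact Or.inl e2
      · exact absurd (e2.symm.trans e1) hne
      · exact Or.inr e2
      · exfalso
        have h12 : u * p₁ = c * (u * p₂) := e1.symm.trans e2
        apply hnec
        rw [h12, ← mul_assoc, hcsq, one_mul]
    · exact Or.inr e1
    · rcases k2 with e2 | e2 | e2 | e2
      · exfalso
        apply hc₁
        have h12 : c * (u * p₁) = 1 := e1.symm.trans e2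
        exact mul_left_cancel (h12.trans hcsq.symm)
      · exact absurd (e2.symm.trans e1) hnec
      · exact Or.inr e2
      · exfalso
        exact hne (mul_left_cancel (e2.symm.trans e1))
  have hy := happ y rfl
  have hyz := happ (y * z) (aux_comm_right hz x y)
  have hyw := happ (y * w) (aux_comm_right hw x y)
  have hyzsq : (y * z) ^ 2 = y ^ 2 * a := aux_sq_mul_central hz y
  have hywsq : (y * w) ^ 2 = y ^ 2 * b := aux_sq_mul_central hw y
  have haeq : a = c := by
    rcases hy with h | h <;> rcases hyz with h' | h'
    · exfalso
      have hh := hyzsq.symm.trans h'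
      rw [h, one_mul] at hh
      exact hz2 hh
    · have hh := hyzsq.symm.trans h'
      rw [h, one_mul] at hh
      exact hh
    · have hh := hyzsq.symm.trans h'
      rw [h] at hh
      exact mul_left_cancel (hh.trans hcsq.symm)
    · exfalso
      have hh := hyzsq.symm.trans h'
      rw [h] at hh
      exact hz2 (mul_left_cancel (hh.trans (mul_one c).symm))
  have hbeq : b = c := by
    rcases hy with h | h <;> rcases hyw with h' | h'
    · exfalso
      have hh := hywsq.symm.trans h'
      rw [h, one_mul] at hh
      exact hw2 hh
    · have hh := hywsq.symm.trans h'
      rw [h, one_mul] at hh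
      exact hh
    · have hh := hywsq.symm.trans h'
      rw [h] at hh
      exact mul_left_cancel (hh.trans hcsq.symm)
    · exfalso
      have hh := hywsq.symm.trans h'
      rw [h] at hh
      exact hw2 (mul_left_cancel (hh.trans (mul_one c).symm))
  exact hneq (haeq.trans hbeq.symm)

end Aux

lemma aux_frattini_le_of_sq {G : Type*} [CommGroup G] (K : Subgroup G)
    (hK : ∀ g : G, g ^ 2 ∈ K) : frattini G ≤ K := by
  intro a ha
  by_contra haK
  have hKS : K ∈ {N : Subgroup G | K ≤ N ∧ a ∉ N} := ⟨le_rfl, haK⟩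
  obtain ⟨M, hKM, hMmax⟩ := zorn_le_nonempty₀ {N : Subgroup G | K ≤ N ∧ a ∉ N}
    (fun c hcS hchain y hy =>
      ⟨sSup c, ⟨le_trans (hcS hy).1 (le_sSup hy), fun hmem => by
        rw [Subgroup.mem_sSup_of_directedOn ⟨y, hy⟩ hchain.directedOn] at hmem
        obtain ⟨p, hp, hap⟩ := hmem
        exact (hcS hp).2 hap⟩, fun z hz => le_sSup hz⟩) K hKS
  have hMS : K ≤ M ∧ a ∉ M := hMmax.1
  have hcoatom : IsCoatom M := by
    constructor
    · intro htop; exact hMS.2 (htop ▸ Subgroup.mem_top a)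
    · intro N hMN
      have haN : a ∈ N := by
        by_contra haN
        exact hMN.2 (hMmax.2 ⟨le_trans hMS.1 hMN.le, haN⟩ hMN.le)
      rw [eq_top_iff]
      intro g _
      by_cases hgM : g ∈ M
      · exact hMN.le hgM
      · have hsub : a ∈ M ⊔ Subgroup.zpowers g := by
          by_contra hns
          have hle : M ⊔ Subgroup.zpowers g ≤ M :=
            hMmax.2 ⟨le_trans hMS.1 le_sup_left, hns⟩ le_sup_left
          exact hgM (hle (Subgroup.mem_sup_right (Subgroup.mem_zpowers g)))
        rw [Subgroup.mem_sup] at hsub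
        obtain ⟨m, hm, p, hp, hmp⟩ := hsub
        obtain ⟨k, hk⟩ := Subgroup.mem_zpowers_iff.mp hp
        have hg2M : g ^ (2 : ℤ) ∈ M := by
          rw [show (2 : ℤ) = ((2 : ℕ) : ℤ) from rfl, zpow_natCast]
          exact hMS.1 (hK g)
        rcases Int.even_or_odd k with ⟨j, hj⟩ | ⟨j, hj⟩
        · exfalso
          apply hMS.2
          have hpM : p ∈ M := by
            rw [← hk, hj, ← two_mul, zpow_mul]
            exact Subgroup.zpow_mem M hg2M j
          rw [← hmp]
          exact mul_mem hm hpM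
        · have hp' : g ^ k = g ^ ((2 : ℤ) * j) * g := by
            rw [hj, zpow_add, zpow_one]
          have hgeq : g = (m * g ^ ((2 : ℤ) * j))⁻¹ * a := by
            rw [← hmp, ← hk, hp']
            group
          rw [hgeq]
          have hjM : g ^ ((2 : ℤ) * j) ∈ M := by
            rw [zpow_mul]
            exact Subgroup.zpow_mem M hg2M j
          exact mul_mem (inv_mem (mul_mem (hMN.le hm) (hMN.le hjM))) haN
  exact hMS.2 (frattini_le_coatom hcoatom ha)

/-- **Lemma 4.11**: if `H` is a nonabelian good group of exponent 4, then the Frattini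
subgroup of its centre has order at most 2. -/
theorem good_exponent_four_frattini_center (H : Type*) [Group H] (hgood : IsGood H)
    (hna : ¬ ∀ a b : H, a * b = b * a) (hexp : Monoid.exponent H = 4) :
    ∀ a ∈ frattini ↥(Subgroup.center H), ∀ b ∈ frattini ↥(Subgroup.center H),
      a ≠ 1 → b ≠ 1 → a = b := by
  intro a ha b hb ha1 hb1
  have h4 : ∀ x : H, x ^ 4 = 1 := fun x => by
    rw [← hexp]; exact Monoid.pow_exponent_eq_one x
  letI : CommGroup ↥(Subgroup.center H) :=
    { (inferInstance : Group ↥(Subgroup.center H)) with mul_comm := mul_comm' }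
  have hfr : frattini ↥(Subgroup.center H) ≤
      (powMonoidHom 2 : ↥(Subgroup.center H) →* ↥(Subgroup.center H)).range :=
    aux_frattini_le_of_sq _ (fun g => MonoidHom.mem_range.mpr ⟨g, rfl⟩)
  obtain ⟨zz, hz⟩ := hfr ha
  obtain ⟨ww, hw⟩ := hfr hb
  have hz' : zz ^ 2 = a := hz
  have hw' : ww ^ 2 = b := hw
  have hcz : ∀ k : H, (zz : H) * k = k * (zz : H) := fun k =>
    (Subgroup.mem_center_iff.mp zz.2 k).symm
  have hcw : ∀ k : H, (ww : H) * k = k * (ww : H) := fun k =>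
    (Subgroup.mem_center_iff.mp ww.2 k).symm
  have hz2 : ((zz : H)) ^ 2 ≠ 1 := by
    intro hcon
    apply ha1
    rw [← hz']
    exact Subtype.ext (by push_cast; exact hcon)
  have hw2 : ((ww : H)) ^ 2 ≠ 1 := by
    intro hcon
    apply hb1
    rw [← hw']
    exact Subtype.ext (by push_cast; exact hcon)
  have hmain := aux_sq_unique hgood h4 hna (zz : H) (ww : H) hcz hcw hz2 hw2
  rw [← hz', ← hw']
  exact Subtype.ext (by push_cast; exact hmain)
end

section
/- If h is a noncentral involution in a good group H of exponent 4 whose Frattini subgroup Φ(H) has order greater than 2, then H has an abelian subgroup A of index 2 such that every element of A is inverted under conjugation by h. -/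
namespace GoodAux


variable {H : Type*} [Group H]

def cc (x y : H) : H := x⁻¹ * y⁻¹ * x * y

lemma cc_spec (x y : H) : x * y = y * x * cc x y := by
  unfold cc; group

lemma cc_eq_one_iff (x y : H) : cc x y = 1 ↔ x * y = y * x := by
  constructor
  · intro h1
    have := cc_spec x y
    rw [h1, mul_one] at this; exact this
  · intro h1
    unfold cc
    simp only [mul_assoc]
    rw [h1]; group

section
variable (hsq : ∀ g x : H, x * g ^ 2 = g ^ 2 * x)

include hsq

lemma sq_mem_center (g : H) : g ^ 2 ∈ Subgroup.center H :=
  Subgroup.mem_center_iff.2 fun x => hsq g x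

lemma sq_sq (x y : H) : (x * y) ^ 2 = (y * x) ^ 2 := by
  have h1 : y * (x * y) ^ 2 = (x * y) ^ 2 * y := hsq (x * y) y
  have h2 : y * ((x * y) ^ 2) * y⁻¹ = (y * x) ^ 2 := by simp only [pow_two]; group
  rw [h1] at h2
  rw [← h2]; group

lemma cc_key (x y : H) : (y * x) ^ 2 * cc x y = x ^ 2 * y ^ 2 := by
  have step : (y * x) ^ 2 * cc x y * cc x y = (x ^ 2 * y ^ 2) * cc x y := by
    calc (y * x) ^ 2 * cc x y * cc x y = y * x ^ 2 * (y * x⁻¹ * y⁻¹ * x * y) := by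
          unfold cc; simp only [pow_two]; group
    _ = x ^ 2 * y * (y * x⁻¹ * y⁻¹ * x * y) := by rw [hsq x y]
    _ = (x ^ 2 * y ^ 2) * cc x y := by unfold cc; simp only [pow_two]; group
  exact mul_right_cancel step

lemma cc_eq (x y : H) : cc x y = ((y * x) ^ 2)⁻¹ * (x ^ 2 * y ^ 2) := by
  rw [← cc_key hsq x y]; group

lemma cc_mem_center (x y : H) : cc x y ∈ Subgroup.center H := by
  rw [cc_eq hsq]
  exact mul_mem (inv_mem (sq_mem_center hsq _))
    (mul_mem (sq_mem_center hsq _) (sq_mem_center hsq _))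

lemma cc_central (x y w : H) : w * cc x y = cc x y * w :=
  (Subgroup.mem_center_iff.1 (cc_mem_center hsq x y)) w

lemma cc_mul_left (x y w : H) : cc (x * y) w = cc x w * cc y w := by
  have e1 : w * (x * y) * cc (x * y) w = w * (x * y) * (cc x w * cc y w) := by
    calc w * (x * y) * cc (x * y) w = (x * y) * w := (cc_spec _ _).symm
    _ = x * (w * y * cc y w) := by rw [mul_assoc, cc_spec y w]
    _ = (x * w) * y * cc y w := by group
    _ = (w * x * cc x w) * y * cc y w := by rw [cc_spec x w]
    _ = w * x * (cc x w * y) * cc y w := by group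
    _ = w * x * (y * cc x w) * cc y w := by rw [← cc_central hsq x w y]
    _ = w * (x * y) * (cc x w * cc y w) := by group
  exact mul_left_cancel e1

lemma cc_symm (x y : H) : cc x y = cc y x := by
  rw [cc_eq hsq x y, cc_eq hsq y x, sq_sq hsq y x]
  have h1 : x ^ 2 * y ^ 2 = y ^ 2 * x ^ 2 := hsq y (x^2)
  rw [h1]

lemma cc_mul_self (x y : H) : cc x y * cc x y = 1 := by
  have h1 : cc (x * x) y = cc x y * cc x y := cc_mul_left hsq x x y
  have h2 : cc (x * x) y = 1 := by
    rw [cc_eq_one_iff]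
    have := hsq x y
    rw [pow_two] at this
    rw [mul_assoc, this, mul_assoc]
  rw [← h1, h2]

lemma cc_inv_self (x y : H) : (cc x y)⁻¹ = cc x y :=
  inv_eq_of_mul_eq_one_right (cc_mul_self hsq x y)

lemma cc_mul_right (x y w : H) : cc x (y * w) = cc x y * cc x w := by
  rw [cc_symm hsq, cc_mul_left hsq, cc_symm hsq y x, cc_symm hsq w x]

lemma cc_inv_left (x y : H) : cc x⁻¹ y = cc x y := by
  have h1 : cc (x⁻¹ * x) y = cc x⁻¹ y * cc x y := cc_mul_left hsq x⁻¹ x y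
  have h2 : cc (x⁻¹ * x) y = 1 := by rw [inv_mul_cancel]; unfold cc; group
  have h3 : cc x⁻¹ y * cc x y = 1 := by rw [← h1, h2]
  have := inv_eq_of_mul_eq_one_left h3
  rw [← this, cc_inv_self hsq]

lemma sq_mul (x y : H) : (x * y) ^ 2 = x ^ 2 * y ^ 2 * cc x y := by
  have k := cc_key hsq y x
  rw [cc_symm hsq y x] at k
  have k2 : (x * y) ^ 2 * (cc x y * cc x y) = y ^ 2 * x ^ 2 * cc x y := by
    rw [← mul_assoc, k]
  rw [cc_mul_self hsq, mul_one] at k2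
  rw [k2, hsq x (y ^ 2)]

end


section Pair

variable {H : Type*} [Group H]

lemma good_pair_cases (hgood : IsGood H) (hexp4 : ∀ g : H, g ^ 4 = 1) (g k : H)
    (hg : g ^ 2 = 1) (hnc : g * k ≠ k * g) :
    Nonempty ((↥(Subgroup.closure ({g, k} : Set H))) ≃* DihedralGroup 4) := by
  obtain ⟨hn, hcase⟩ := hgood.2 g k
  set K := Subgroup.closure ({g, k} : Set H) with hK
  haveI := hn.subgroupOf K
  have hbot : (Subgroup.zpowers (g ^ 2)).subgroupOf K = ⊥ := by
    rw [hg, Subgroup.zpowers_one_eq_bot, Subgroup.bot_subgroupOf]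
  have hgK : g ∈ K := Subgroup.subset_closure (by left; rfl)
  have hkK : k ∈ K := Subgroup.subset_closure (by right; rfl)
  set gK : K := ⟨g, hgK⟩ with hgKdef
  set kK : K := ⟨k, hkK⟩ with hkKdef
  have hncK : gK * kK ≠ kK * gK := by
    intro he; apply hnc
    have := congrArg (Subtype.val) he
    simpa using this
  rcases hcase with habel | hdih
  · exfalso
    apply hncK
    have hinj : Function.Injective
        (QuotientGroup.mk' ((Subgroup.zpowers (g ^ 2)).subgroupOf K)) := by
      rw [← MonoidHom.ker_eq_bot_iff, QuotientGroup.ker_mk']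
      exact hbot
    apply hinj
    simp only [map_mul]
    exact habel _ _
  · obtain ⟨n, hn0, ⟨e⟩⟩ := hdih
    let eq1 : (K ⧸ (⊥ : Subgroup K)) ≃* K := QuotientGroup.quotientBot
    let eq2 : (K ⧸ ((Subgroup.zpowers (g ^ 2)).subgroupOf K)) ≃* (K ⧸ (⊥ : Subgroup K)) :=
      QuotientGroup.quotientMulEquivOfEq hbot
    let φ : K ≃* DihedralGroup n := eq1.symm.trans (eq2.symm.trans e)
    have hexpK : ∀ x : K, x ^ 4 = 1 := by
      intro x
      apply Subtype.ext
      have := hexp4 (x : H)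
      simpa using this
    have hr4 : (DihedralGroup.r 1 : DihedralGroup n) ^ 4 = 1 := by
      have h1 := hexpK (φ.symm (DihedralGroup.r 1))
      have h2 := congrArg φ h1
      simpa [map_pow] using h2
    have hdvd : n ∣ 4 := by
      have := orderOf_dvd_of_pow_eq_one hr4
      rwa [DihedralGroup.orderOf_r_one] at this
    have hcomm_contr : ∀ (hc : ∀ u v : DihedralGroup n, u * v = v * u), False := by
      intro hc
      apply hncK
      apply φ.injective
      simp only [map_mul]
      exact hc _ _
    have hne : n = 4 := by
      have h1 : 1 ≤ n := Nat.one_le_iff_ne_zero.2 hn0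
      have h4 : n ≤ 4 := Nat.le_of_dvd (by norm_num) hdvd
      interval_cases n
      · exact absurd (hcomm_contr (by decide)) id
      · exact absurd (hcomm_contr (by decide)) id
      · exfalso; norm_num at hdvd
      · rfl
    subst hne
    exact ⟨φ⟩

lemma pair_d4 (hgood : IsGood H) (hexp4 : ∀ g : H, g ^ 4 = 1) (g k : H)
    (hg : g ^ 2 = 1) :
    g * k = k * g ∨ g⁻¹ * k * g = k⁻¹ ∨ k ^ 2 = 1 := by
  by_cases hnc : g * k = k * g
  · exact Or.inl hnc
  obtain ⟨φ⟩ := good_pair_cases hgood hexp4 g k hg hnc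
  set K := Subgroup.closure ({g, k} : Set H)
  have hgK : g ∈ K := Subgroup.subset_closure (by left; rfl)
  have hkK : k ∈ K := Subgroup.subset_closure (by right; rfl)
  set gK : K := ⟨g, hgK⟩
  set kK : K := ⟨k, hkK⟩
  have d4 : ∀ u v : DihedralGroup 4, u ^ 2 = 1 → u * v ≠ v * u →
      u⁻¹ * v * u = v⁻¹ ∨ v ^ 2 = 1 := by decide
  have hu2 : (φ gK) ^ 2 = 1 := by
    rw [← map_pow]
    have : gK ^ 2 = 1 := by
      apply Subtype.ext; simpa using hg
    rw [this, map_one]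
  have hunc : φ gK * φ kK ≠ φ kK * φ gK := by
    intro he
    apply hnc
    rw [← map_mul, ← map_mul] at he
    have := φ.injective he
    have := congrArg (Subtype.val) this
    simpa using this
  rcases d4 (φ gK) (φ kK) hu2 hunc with h1 | h1
  · refine Or.inr (Or.inl ?_)
    rw [← map_inv, ← map_mul, ← map_mul, ← map_inv] at h1
    have := φ.injective h1
    have := congrArg (Subtype.val) this
    simpa using this
  · refine Or.inr (Or.inr ?_)
    rw [← map_pow] at h1
    have h2 : kK ^ 2 = 1 := φ.injective (by rw [h1, map_one])
    have := congrArg (Subtype.val) h2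
    simpa using this

lemma pair_sq (hgood : IsGood H) (hexp4 : ∀ g : H, g ^ 4 = 1) (g k : H)
    (hg : g ^ 2 = 1) (hnc : g * k ≠ k * g) :
    k ^ 2 = 1 ∨ (g * k) ^ 2 = 1 ∨ k ^ 2 = (g * k) ^ 2 := by
  obtain ⟨φ⟩ := good_pair_cases hgood hexp4 g k hg hnc
  set K := Subgroup.closure ({g, k} : Set H)
  have hgK : g ∈ K := Subgroup.subset_closure (by left; rfl)
  have hkK : k ∈ K := Subgroup.subset_closure (by right; rfl)
  set gK : K := ⟨g, hgK⟩
  set kK : K := ⟨k, hkK⟩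
  have d4 : ∀ u v : DihedralGroup 4, v ^ 2 = 1 ∨ (u * v) ^ 2 = 1 ∨ v ^ 2 = (u * v) ^ 2 := by
    decide
  rcases d4 (φ gK) (φ kK) with h1 | h1 | h1
  · refine Or.inl ?_
    rw [← map_pow] at h1
    have h2 : kK ^ 2 = 1 := φ.injective (by rw [h1, map_one])
    have := congrArg (Subtype.val) h2
    simpa using this
  · refine Or.inr (Or.inl ?_)
    rw [← map_mul, ← map_pow] at h1
    have h2 : (gK * kK) ^ 2 = 1 := φ.injective (by rw [h1, map_one])
    have := congrArg (Subtype.val) h2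
    simpa using this
  · refine Or.inr (Or.inr ?_)
    rw [← map_mul, ← map_pow, ← map_pow] at h1
    have h2 : kK ^ 2 = (gK * kK) ^ 2 := φ.injective h1
    have := congrArg (Subtype.val) h2
    simpa using this

end Pair

section Frattini

variable {H : Type*} [Group H]

lemma frattini_not_small (hexp : Monoid.exponent H = 4)
    (hfr : Nat.card (frattini H) = 0 ∨ 2 < Nat.card (frattini H))
    (w : H) (hw1 : w ≠ 1) (hw2 : w * w = 1) (hwc : ∀ x : H, x * w = w * x) :
    ∃ g : H, g ^ 2 ≠ 1 ∧ g ^ 2 ≠ w := by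
  by_contra hcon
  push_neg at hcon
  -- hcon : ∀ g, g ^ 2 ≠ 1 → g ^ 2 = w
  set N := Subgroup.zpowers w with hN
  haveI hNnorm : N.Normal := by
    constructor
    intro x hx g
    obtain ⟨m, rfl⟩ := hx
    have hc : g * (w ^ m) * g⁻¹ = w ^ m := by
      have : Commute g w := hwc g
      rw [(this.zpow_right m).eq]; group
    rw [hc]
    exact Subgroup.zpow_mem _ (Subgroup.mem_zpowers w) m
  have hword : orderOf w = 2 := by
    haveI : Fact (Nat.Prime 2) := ⟨by norm_num⟩
    exact orderOf_eq_prime (by rw [pow_two]; exact hw2) hw1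
  have hNcard : Nat.card N = 2 := by rw [Nat.card_zpowers, hword]
  haveI hNfin : Finite N := Nat.finite_of_card_ne_zero (by rw [hNcard]; norm_num)
  -- every square is in N
  have hsqN : ∀ g : H, g ^ 2 ∈ N := by
    intro g
    by_cases hg : g ^ 2 = 1
    · rw [hg]; exact one_mem N
    · rw [hcon g hg]; exact Subgroup.mem_zpowers w
  -- frattini H ≤ N
  have hfrle : frattini H ≤ N := by
    intro v hv
    by_contra hvN
    -- build an index 2 subgroup avoiding v
    have hV2 : ∀ x : H ⧸ N, x * x = 1 := by
      intro x
      obtain ⟨g, rfl⟩ := QuotientGroup.mk_surjective x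
      show ((g * g : H) : H ⧸ N) = 1
      rw [QuotientGroup.eq_one_iff]
      rw [← pow_two]
      exact hsqN g
    have hVcomm : ∀ x y : H ⧸ N, x * y = y * x := by
      intro x y
      have h1 : (x * y) * (x * y) = 1 := hV2 _
      have h2 : y * x = (x * y)⁻¹ := by
        rw [mul_inv_rev]
        rw [inv_eq_of_mul_eq_one_right (hV2 x), inv_eq_of_mul_eq_one_right (hV2 y)]
      rw [h2, inv_eq_of_mul_eq_one_right h1]
    letI : CommGroup (H ⧸ N) := { (inferInstance : Group (H ⧸ N)) with mul_comm := hVcomm }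
    letI : Module (ZMod 2) (Additive (H ⧸ N)) := AddCommGroup.zmodModule (by
      intro x
      show (2 : ℕ) • x = 0
      rw [two_nsmul]
      exact hV2 x.toMul)
    set vbar : Additive (H ⧸ N) := Additive.ofMul ((v : H ⧸ N)) with hvbar
    have hvbar0 : vbar ≠ 0 := by
      intro hx
      apply hvN
      have : ((v : H) : H ⧸ N) = 1 := hx
      rwa [QuotientGroup.eq_one_iff] at this
    obtain ⟨q, hq⟩ := Submodule.exists_isCompl (Submodule.span (ZMod 2) {vbar})
    set p := Submodule.span (ZMod 2) {vbar} with hp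
    let proj := Submodule.linearProjOfIsCompl p q hq
    let eqp := LinearEquiv.toSpanNonzeroSingleton (ZMod 2) (Additive (H ⧸ N)) vbar hvbar0
    let fl : Additive (H ⧸ N) →ₗ[ZMod 2] ZMod 2 := eqp.symm.toLinearMap.comp proj
    have hflv : fl vbar = 1 := by
      have hmem : vbar ∈ p := Submodule.mem_span_singleton_self vbar
      have h1 : proj vbar = ⟨vbar, hmem⟩ := Submodule.linearProjOfIsCompl_apply_left hq ⟨vbar, hmem⟩
      have h2 : eqp 1 = ⟨vbar, hmem⟩ := by
        apply Subtype.ext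
        show (1 : ZMod 2) • vbar = vbar
        rw [one_smul]
      show eqp.symm (proj vbar) = 1
      rw [h1, ← h2, LinearEquiv.symm_apply_apply]
    -- make a monoid hom H →* Multiplicative (ZMod 2)
    let f : H →* Multiplicative (ZMod 2) :=
      MonoidHom.comp (AddMonoidHom.toMultiplicativeRight fl.toAddMonoidHom) (QuotientGroup.mk' N)
    have hfv : f v = Multiplicative.ofAdd 1 := by
      show Multiplicative.ofAdd (fl (Additive.ofMul ((v : H ⧸ N)))) = Multiplicative.ofAdd (1 : ZMod 2)
      rw [← hvbar, hflv]
    have hfsur : Function.Surjective f := by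
      intro c
      rcases (by decide : ∀ c : Multiplicative (ZMod 2), c = 1 ∨ c = Multiplicative.ofAdd 1) c with
        hc | hc
      · exact ⟨1, by rw [map_one, hc]⟩
      · exact ⟨v, by rw [hfv, hc]⟩
    have hker2 : f.ker.index = 2 := by
      rw [Subgroup.index_ker]
      have : f.range = ⊤ := MonoidHom.range_eq_top_of_surjective f hfsur
      rw [this]
      have e1 : Nat.card ↥(⊤ : Subgroup (Multiplicative (ZMod 2))) =
          Nat.card (Multiplicative (ZMod 2)) := Nat.card_congr Subgroup.topEquiv.toEquiv
      rw [e1, Nat.card_eq_fintype_card]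
      rfl
    have hvker : v ∉ f.ker := by
      intro hx
      have : f v = 1 := hx
      rw [hfv] at this
      exact (by decide : (Multiplicative.ofAdd (1 : ZMod 2)) ≠ 1) this
    have hcoatom : IsCoatom f.ker := by
      constructor
      · intro htop
        have := Subgroup.index_top (G := H)
        rw [← htop, hker2] at this
        norm_num at this
      · intro K hK
        have hdvd : K.index ∣ 2 := by
          rw [← hker2]
          exact Subgroup.index_dvd_of_le hK.le
        have h2 : K.index = 1 ∨ K.index = 2 :=
          Nat.prime_two.eq_one_or_self_of_dvd _ hdvd
        rcases h2 with h2 | h2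
        · exact Subgroup.index_eq_one.mp h2
        · exfalso
          have h3 := Subgroup.relIndex_mul_index hK.le
          rw [h2, hker2] at h3
          have h4 : (f.ker).relIndex K = 1 := by omega
          exact hK.2 (Subgroup.relIndex_eq_one.mp h4)
    have := frattini_le_coatom hcoatom hv
    exact hvker this
  -- conclude cardinality contradiction
  have hsub : (frattini H : Set H) ⊆ (N : Set H) := hfrle
  have hfinN : (N : Set H).Finite := Set.toFinite _
  have hfinFr : (frattini H : Set H).Finite := hfinN.subset hsub
  have hcard : Nat.card (frattini H) ≤ 2 := by
    rw [← hNcard]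
    have e1 : Nat.card (frattini H) = (frattini H : Set H).ncard := Nat.card_coe_set_eq _
    have e2 : Nat.card N = (N : Set H).ncard := Nat.card_coe_set_eq _
    rw [e1, e2]
    exact Set.ncard_le_ncard hsub hfinN
  haveI : Finite (frattini H) := hfinFr.to_subtype
  have hpos : 0 < Nat.card (frattini H) := Nat.card_pos
  rcases hfr with h0 | h2
  · omega
  · omega

end Frattini

end GoodAux

open GoodAux

/-- **Lemma 4.13**: if `h` is a noncentral involution in a good group `H` of exponent 4
with `|Φ(H)| > 2`, then `H` has an abelian subgroup `A` of index 2 every element of which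
is inverted by `h`. -/
theorem good_noncentral_involution (H : Type*) [Group H] (hgood : IsGood H)
    (hexp : Monoid.exponent H = 4)
    (hfr : Nat.card (frattini H) = 0 ∨ 2 < Nat.card (frattini H))
    (h : H) (hh : orderOf h = 2) (hnc : h ∉ Subgroup.center H) :
    ∃ A : Subgroup H, (∀ a ∈ A, ∀ b ∈ A, a * b = b * a) ∧ A.index = 2 ∧
      ∀ a ∈ A, h⁻¹ * a * h = a⁻¹ := by
  classical
  have hexp4 : ∀ g : H, g ^ 4 = 1 := by
    intro g; have := Monoid.pow_exponent_eq_one g; rwa [hexp] at this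
  -- squares are central
  have hsq : ∀ g x : H, x * g ^ 2 = g ^ 2 * x := by
    intro g x
    obtain ⟨hn, -⟩ := hgood.2 g g
    obtain ⟨n, hxn⟩ := hn.conj_mem (g ^ 2) (Subgroup.mem_zpowers _) x
    have hxn' : (g ^ 2) ^ n = x * g ^ 2 * x⁻¹ := hxn
    have h4 : g ^ 2 * g ^ 2 = 1 := by rw [← pow_add]; exact hexp4 g
    have hz2 : (g ^ 2) ^ (2 : ℤ) = 1 := by
      rw [zpow_two]; exact h4
    have hcases : x * g ^ 2 * x⁻¹ = 1 ∨ x * g ^ 2 * x⁻¹ = g ^ 2 := by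
      rcases Int.even_or_odd n with ⟨m, hm⟩ | ⟨m, hm⟩
      · left
        rw [← hxn', hm, ← two_mul, zpow_mul, hz2, one_zpow]
      · right
        rw [← hxn', hm, zpow_add, zpow_mul, hz2, one_zpow, one_mul, zpow_one]
    rcases hcases with he | he
    · have : g ^ 2 = 1 := by
        have e1 : g ^ 2 = x⁻¹ * (x * g ^ 2 * x⁻¹) * x := by group
        rw [he] at e1; rw [e1]; group
      rw [this, mul_one, one_mul]
    · have := congrArg (· * x) he
      try simp only at this
      calc x * g ^ 2 = x * g ^ 2 * x⁻¹ * x := by group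
      _ = g ^ 2 * x := by rw [he]
  have h2 : h * h = 1 := by
    have := pow_orderOf_eq_one h; rw [hh, pow_two] at this; exact this
  have hh2 : h ^ 2 = 1 := by rw [pow_two]; exact h2
  have hsqsq : ∀ x : H, x ^ 2 * x ^ 2 = 1 := fun x => by rw [← pow_add]; exact hexp4 x
  have hsqinv : ∀ x : H, (x ^ 2)⁻¹ = x ^ 2 := fun x => inv_eq_of_mul_eq_one_right (hsqsq x)
  -- toolkit abbreviations
  have Hspec : ∀ x y : H, x * y = y * x * cc x y := cc_spec
  have Hiff : ∀ x y : H, cc x y = 1 ↔ x * y = y * x := cc_eq_one_iff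
  have Hcen : ∀ x y w : H, w * cc x y = cc x y * w := cc_central hsq
  have Hsym : ∀ x y : H, cc x y = cc y x := cc_symm hsq
  have Hml : ∀ x y w : H, cc (x * y) w = cc x w * cc y w := cc_mul_left hsq
  have Hmr : ∀ x y w : H, cc x (y * w) = cc x y * cc x w := cc_mul_right hsq
  have Hss : ∀ x y : H, cc x y * cc x y = 1 := cc_mul_self hsq
  have Hil : ∀ x y : H, cc x⁻¹ y = cc x y := cc_inv_left hsq
  have Hsq : ∀ x y : H, (x * y) ^ 2 = x ^ 2 * y ^ 2 * cc x y := sq_mul hsq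
  have Hconj : ∀ x : H, h⁻¹ * x * h = x * cc x h := by
    intro x
    calc h⁻¹ * x * h = h⁻¹ * (x * h) := by group
    _ = h⁻¹ * (h * x * cc x h) := by rw [← Hspec x h]
    _ = x * cc x h := by group
  have Hinvert : ∀ x : H, (h⁻¹ * x * h = x⁻¹) ↔ cc x h = x ^ 2 := by
    intro x
    constructor
    · intro he
      rw [Hconj x] at he
      have e2 : cc x h = x⁻¹ * (x * cc x h) := by group
      rw [he] at e2
      rw [e2]
      have e3 : x⁻¹ * x⁻¹ = (x ^ 2)⁻¹ := by rw [pow_two, mul_inv_rev]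
      rw [e3, hsqinv]
    · intro he
      rw [Hconj x, he]
      have e3 : x * x ^ 2 = x ^ 4 * x⁻¹ := by group
      rw [e3, hexp4 x, one_mul]
  have Tph : ∀ k : H, h * k = k * h ∨ h⁻¹ * k * h = k⁻¹ ∨ k ^ 2 = 1 :=
    fun k => pair_d4 hgood hexp4 h k hh2
  have Hnc2 : ∀ x y : H, cc x y ≠ 1 → x * y ≠ y * x := fun x y hcc he => hcc ((Hiff x y).2 he)
  have Hprod : ∀ x y : H, h⁻¹ * x * h = x⁻¹ → h⁻¹ * y * h = y⁻¹ → cc x y = 1 →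
      h⁻¹ * (x * y) * h = (x * y)⁻¹ := by
    intro x y hx hy hcomm
    have hxy : x * y = y * x := (Hiff x y).1 hcomm
    calc h⁻¹ * (x * y) * h = (h⁻¹ * x * h) * (h⁻¹ * y * h) := by group
    _ = x⁻¹ * y⁻¹ := by rw [hx, hy]
    _ = (y * x)⁻¹ := by rw [mul_inv_rev]
    _ = (x * y)⁻¹ := by rw [← hxy]
  -- A0 : two h-inverted elements either commute or the commutator is the square
  have A0 : ∀ u v : H, h⁻¹ * u * h = u⁻¹ → h⁻¹ * v * h = v⁻¹ → v ^ 2 ≠ 1 → cc u v ≠ 1 →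
      cc u v = v ^ 2 := by
    intro u v hu hv hv2 hcc
    have ht2 : (u * h) ^ 2 = 1 := by
      rw [Hsq u h, (Hinvert u).1 hu, hh2, mul_one]
      exact hsqsq u
    have hctv : cc (u * h) v = cc u v * v ^ 2 := by
      rw [Hml u h v, Hsym h v, (Hinvert v).1 hv]
    by_cases hc : cc (u * h) v = 1
    · have e1 : cc u v * v ^ 2 = 1 := by rw [← hctv]; exact hc
      have e2 := inv_eq_of_mul_eq_one_left e1
      rw [← e2, hsqinv]
    · have hnct : (u * h) * v ≠ v * (u * h) := Hnc2 _ _ hc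
      have htv2 : ((u * h) * v) ^ 2 = cc u v := by
        rw [Hsq, ht2, one_mul, hctv]
        calc v ^ 2 * (cc u v * v ^ 2) = cc u v * (v ^ 2 * v ^ 2) := by
              rw [← mul_assoc, Hcen u v (v ^ 2), mul_assoc]
        _ = cc u v := by rw [hsqsq, mul_one]
      rcases pair_sq hgood hexp4 (u * h) v ht2 hnct with e | e | e
      · exact absurd e hv2
      · rw [htv2] at e; exact absurd e hcc
      · rw [htv2] at e; exact e.symm
  -- noncommuting partner of h
  obtain ⟨g0, hg0⟩ : ∃ g0 : H, ¬ h * g0 = g0 * h := by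
    by_contra hcon; push_neg at hcon
    exact hnc (Subgroup.mem_center_iff.2 (fun g => (hcon g).symm))
  have hinv_gh : ∀ g : H, g ^ 2 = 1 → h⁻¹ * (g * h) * h = (g * h)⁻¹ := by
    intro g hg2
    have hginv : g⁻¹ = g := by
      rw [pow_two] at hg2; exact inv_eq_of_mul_eq_one_right hg2
    calc h⁻¹ * (g * h) * h = h⁻¹ * g * (h * h) := by group
    _ = h⁻¹ * g := by rw [h2, mul_one]
    _ = (g * h)⁻¹ := by rw [mul_inv_rev, hginv]
  -- S is nonempty
  obtain ⟨s0, hs0I, hs0sq⟩ : ∃ s : H, (h⁻¹ * s * h = s⁻¹) ∧ s ^ 2 ≠ 1 := by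
    rcases Tph g0 with hc | hc | hc
    · exact absurd hc hg0
    · refine ⟨g0, hc, ?_⟩
      intro hsq1
      apply hg0
      have hginv : g0⁻¹ = g0 := by
        rw [pow_two] at hsq1; exact inv_eq_of_mul_eq_one_right hsq1
      rw [hginv] at hc
      calc h * g0 = h * (h⁻¹ * g0 * h) := by rw [hc]
      _ = g0 * h := by group
    · refine ⟨g0 * h, hinv_gh g0 hc, ?_⟩
      rw [Hsq, hc, one_mul, hh2, one_mul]
      intro e1
      exact hg0 ((Hiff g0 h).1 e1).symm
  -- Wstep : for q commuting with h (q² ≠ 1) and s inverted, cc q s ∈ {1, q²}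
  have Wstep : ∀ q s : H, cc q h = 1 → q ^ 2 ≠ 1 → h⁻¹ * s * h = s⁻¹ →
      cc q s = 1 ∨ cc q s = q ^ 2 := by
    intro q s hqh hq2 hsI
    by_cases hw1 : cc q s = 1
    · exact Or.inl hw1
    right
    have hsh2 : (s * h) ^ 2 = 1 := by
      rw [Hsq, (Hinvert s).1 hsI, hh2, mul_one]
      exact hsqsq s
    have hcc : cc (s * h) q = cc q s := by
      rw [Hml, Hsym h q, hqh, mul_one, Hsym s q]
    have hncs : (s * h) * q ≠ q * (s * h) := Hnc2 _ _ (by rw [hcc]; exact hw1)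
    rcases pair_sq hgood hexp4 (s * h) q hsh2 hncs with e | e | e
    · exact absurd e hq2
    · rw [Hsq, hsh2, one_mul, hcc] at e
      have e2 := eq_inv_of_mul_eq_one_right e
      rw [hsqinv] at e2
      exact e2
    · exfalso
      rw [Hsq, hsh2, one_mul, hcc] at e
      apply hw1
      have e2 : q ^ 2 * 1 = q ^ 2 * cc q s := by rw [mul_one]; exact e
      exact (mul_left_cancel e2).symm
  -- squares commute among themselves helper
  have hsqswap : ∀ a b : H, a ^ 2 * b ^ 2 * a ^ 2 = b ^ 2 := by
    intro a b
    calc a ^ 2 * b ^ 2 * a ^ 2 = a ^ 2 * (b ^ 2 * a ^ 2) := by group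
    _ = a ^ 2 * (a ^ 2 * b ^ 2) := by rw [hsq a (b ^ 2)]
    _ = (a ^ 2 * a ^ 2) * b ^ 2 := by group
    _ = b ^ 2 := by rw [hsqsq, one_mul]
  -- Step A : inverted elements of order 4 commute
  have SA : ∀ s t : H, (h⁻¹ * s * h = s⁻¹ ∧ s ^ 2 ≠ 1) → (h⁻¹ * t * h = t⁻¹ ∧ t ^ 2 ≠ 1) →
      cc s t = 1 := by
    rintro s t ⟨hsI, hs2⟩ ⟨htI, ht2⟩
    by_contra hz
    have hzt : cc s t = t ^ 2 := A0 s t hsI htI ht2 hz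
    have hzs : cc s t = s ^ 2 := by
      rw [Hsym]
      exact A0 t s htI hsI hs2 (fun e => hz (by rw [Hsym]; exact e))
    have hz1 : cc s t ≠ 1 := hz
    have hzz : cc s t * cc s t = 1 := Hss s t
    have hzc : ∀ x : H, x * cc s t = cc s t * x := fun x => Hcen s t x
    obtain ⟨g, hg1, hgz⟩ := frattini_not_small hexp hfr (cc s t) hz1 hzz hzc
    rcases Tph g with hgc | hgI | hgs
    · -- g commutes with h
      have hcgh : cc g h = 1 := (Hiff g h).2 hgc.symm
      have hw' : cc g s = 1 ∨ cc g s = g ^ 2 := Wstep g s hcgh hg1 hsI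
      have hcgs_h : cc (g * s) h = s ^ 2 := by
        rw [Hml, hcgh, one_mul, (Hinvert s).1 hsI]
      rcases Tph (g * s) with e | e | e
      · exfalso
        have e1 : cc (g * s) h = 1 := (Hiff _ _).2 e.symm
        rw [hcgs_h] at e1
        exact hz1 (hzs.trans e1)
      · -- g*s inverted
        have e2 : cc (g * s) h = (g * s) ^ 2 := (Hinvert _).1 e
        rw [hcgs_h, Hsq] at e2
        have e3 : cc g s = g ^ 2 := by
          have e4 := congrArg (fun r => g ^ 2 * r) e2
          try simp only at e4
          rw [show g ^ 2 * (g ^ 2 * s ^ 2 * cc g s) = (g ^ 2 * g ^ 2) * (s ^ 2 * cc g s) from by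
            group, hsqsq, one_mul] at e4
          rw [← hsq g (s ^ 2)] at e4
          exact (mul_left_cancel e4).symm
        have egs2 : (g * s) ^ 2 = s ^ 2 := by
          rw [Hsq, e3]
          exact hsqswap g s
        have hccself : cc s s = 1 := (Hiff s s).2 rfl
        have hcsgs : cc s (g * s) = g ^ 2 := by
          rw [Hmr, hccself, mul_one, Hsym s g, e3]
        have final := A0 s (g * s) hsI e (by rw [egs2]; exact hs2)
          (by rw [hcsgs]; exact hg1)
        rw [hcsgs, egs2] at final
        exact hgz (final.trans hzs.symm)
      · -- (g*s)² = 1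
        rw [Hsq] at e
        rcases hw' with hw | hw
        · rw [hw, mul_one] at e
          have e1 := eq_inv_of_mul_eq_one_left e
          rw [hsqinv] at e1
          exact hgz (e1.trans hzs.symm)
        · rw [hw, hsqswap g s] at e
          exact hs2 e
    · -- g inverted
      have hgsc : cc g s = 1 := by
        by_contra hne
        have e1 := A0 g s hgI hsI hs2 hne
        have e2 := A0 s g hsI hgI hg1 (fun e => hne ((Hsym g s).trans e))
        have e3 : s ^ 2 = g ^ 2 := by rw [← e1, Hsym]; exact e2
        exact hgz (e3.symm.trans hzs.symm)
      have hgtc : cc g t = 1 := by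
        by_contra hne
        have e1 := A0 g t hgI htI ht2 hne
        have e2 := A0 t g htI hgI hg1 (fun e => hne ((Hsym g t).trans e))
        have e3 : t ^ 2 = g ^ 2 := by rw [← e1, Hsym]; exact e2
        exact hgz (e3.symm.trans hzt.symm)
      have huI : h⁻¹ * (s * g) * h = (s * g)⁻¹ := Hprod s g hsI hgI (by rw [Hsym]; exact hgsc)
      have hu2 : (s * g) ^ 2 = s ^ 2 * g ^ 2 := by
        rw [Hsq, Hsym s g, hgsc, mul_one]
      have hu2ne : (s * g) ^ 2 ≠ 1 := by
        rw [hu2]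
        intro e
        have e1 := eq_inv_of_mul_eq_one_left e
        rw [hsqinv] at e1
        exact hgz (e1.symm.trans hzs.symm)
      have hctu : cc t (s * g) = cc s t := by
        rw [Hmr, Hsym t s, Hsym t g, hgtc, mul_one]
      have final := A0 t (s * g) htI huI hu2ne (by rw [hctu]; exact hz1)
      rw [hctu, hu2, ← hzs] at final
      apply hg1
      have e2 : cc s t * 1 = cc s t * g ^ 2 := by rw [mul_one]; exact final
      exact (mul_left_cancel e2).symm
    · exact hg1 hgs
  -- C1 : elements commuting with h of order 4 share squares with S
  have C1 : ∀ p : H, h * p = p * h → p ^ 2 ≠ 1 →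
      ∀ s : H, (h⁻¹ * s * h = s⁻¹ ∧ s ^ 2 ≠ 1) → p ^ 2 = s ^ 2 := by
    rintro p hpc hp2 s ⟨hsI, hs2⟩
    have hcph : cc p h = 1 := (Hiff p h).2 hpc.symm
    have hcps_h : cc (p * s) h = s ^ 2 := by
      rw [Hml, hcph, one_mul, (Hinvert s).1 hsI]
    rcases Wstep p s hcph hp2 hsI with hm | hm
    · rcases Tph (p * s) with e | e | e
      · exfalso
        have e1 : cc (p * s) h = 1 := (Hiff _ _).2 e.symm
        rw [hcps_h] at e1
        exact hs2 e1
      · exfalso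
        have e2 : cc (p * s) h = (p * s) ^ 2 := (Hinvert _).1 e
        rw [hcps_h, Hsq, hm, mul_one] at e2
        -- e2 : s^2 = p^2 * s^2
        apply hp2
        have e3 : 1 * s ^ 2 = p ^ 2 * s ^ 2 := by rw [one_mul]; exact e2
        exact (mul_right_cancel e3).symm
      · -- (p*s)² = 1 gives p² = s²
        rw [Hsq, hm, mul_one] at e
        have e1 := eq_inv_of_mul_eq_one_left e
        rw [hsqinv] at e1
        exact e1
    · exfalso
      rcases Tph (p * s) with e | e | e
      · have e1 : cc (p * s) h = 1 := (Hiff _ _).2 e.symm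
        rw [hcps_h] at e1
        exact hs2 e1
      · -- p*s inverted with (p*s)² = s² ≠ 1, so p*s ∈ S; then SA with s gives cc p s = 1
        have eps2 : (p * s) ^ 2 = s ^ 2 := by
          rw [Hsq, hm]
          exact hsqswap p s
        have := SA (p * s) s ⟨e, by rw [eps2]; exact hs2⟩ ⟨hsI, hs2⟩
        rw [Hml, SA s s ⟨hsI, hs2⟩ ⟨hsI, hs2⟩, mul_one] at this
        rw [hm] at this
        exact hp2 this
      · rw [Hsq, hm, hsqswap p s] at e
        exact hs2 e
  -- C2 : elements commuting with h are involutions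
  have C2 : ∀ p : H, h * p = p * h → p ^ 2 = 1 := by
    intro p hpc
    by_contra hp2
    have hps0 : p ^ 2 = s0 ^ 2 := C1 p hpc hp2 s0 ⟨hs0I, hs0sq⟩
    have hall : ∀ g : H, g ^ 2 = 1 ∨ g ^ 2 = p ^ 2 := by
      intro g
      by_cases hg2 : g ^ 2 = 1
      · exact Or.inl hg2
      right
      rcases Tph g with e | e | e
      · exact (C1 g e hg2 s0 ⟨hs0I, hs0sq⟩).trans hps0.symm
      · exact (C1 p hpc hp2 g ⟨e, hg2⟩).symm
      · exact absurd e hg2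
    obtain ⟨g, hg1, hgp⟩ := frattini_not_small hexp hfr (p ^ 2) hp2 (hsqsq p)
      (fun x => hsq p x)
    rcases hall g with e | e
    · exact hg1 e
    · exact hgp e
  -- dichotomy for inverted involutions
  have Dich : ∀ g : H, h⁻¹ * g * h = g⁻¹ → g ^ 2 = 1 →
      (∀ s : H, (h⁻¹ * s * h = s⁻¹ ∧ s ^ 2 ≠ 1) → cc g s = 1) ∨
      (∀ s : H, (h⁻¹ * s * h = s⁻¹ ∧ s ^ 2 ≠ 1) → cc g s = s ^ 2) := by
    intro g hgI hg2
    by_cases hex : ∃ s1 : H, (h⁻¹ * s1 * h = s1⁻¹ ∧ s1 ^ 2 ≠ 1) ∧ cc g s1 = 1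
    · left
      obtain ⟨s1, hs1, hgs1⟩ := hex
      have hgs1I : h⁻¹ * (g * s1) * h = (g * s1)⁻¹ := Hprod g s1 hgI hs1.1 hgs1
      have hgs1sq : (g * s1) ^ 2 ≠ 1 := by
        rw [Hsq, hg2, one_mul, hgs1, mul_one]
        exact hs1.2
      intro s hs
      have e1 := SA (g * s1) s ⟨hgs1I, hgs1sq⟩ hs
      rw [Hml, SA s1 s hs1 hs, mul_one] at e1
      exact e1
    · right
      intro s hs
      push_neg at hex
      exact A0 g s hgI hs.1 hs.2 (hex s hs)
  -- commutativity inside A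
  have ABcomm : ∀ x y : H,
      (h⁻¹ * x * h = x⁻¹) → (∀ s : H, (h⁻¹ * s * h = s⁻¹ ∧ s ^ 2 ≠ 1) → cc x s = 1) →
      (h⁻¹ * y * h = y⁻¹) → (∀ s : H, (h⁻¹ * s * h = s⁻¹ ∧ s ^ 2 ≠ 1) → cc y s = 1) →
      cc x y = 1 := by
    intro x y hxI hxc hyI hyc
    by_cases hx2 : x ^ 2 = 1
    · by_cases hy2 : y ^ 2 = 1
      · have hxs0 : cc x s0 = 1 := hxc s0 ⟨hs0I, hs0sq⟩
        have hxs0I : h⁻¹ * (x * s0) * h = (x * s0)⁻¹ := Hprod x s0 hxI hs0I hxs0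
        have hxs0sq : (x * s0) ^ 2 ≠ 1 := by
          rw [Hsq, hx2, one_mul, hxs0, mul_one]
          exact hs0sq
        have e1 := hyc (x * s0) ⟨hxs0I, hxs0sq⟩
        rw [Hmr, hyc s0 ⟨hs0I, hs0sq⟩, mul_one] at e1
        rw [Hsym]
        exact e1
      · exact hxc y ⟨hyI, hy2⟩
    · rw [Hsym]
      exact hyc x ⟨hxI, hx2⟩
  -- the subgroup A
  let A : Subgroup H :=
  { carrier := {x : H | (h⁻¹ * x * h = x⁻¹) ∧
      ∀ s : H, (h⁻¹ * s * h = s⁻¹ ∧ s ^ 2 ≠ 1) → cc x s = 1},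
    one_mem' := by
      refine ⟨by group, fun s _ => ?_⟩
      exact (Hiff 1 s).2 (by group)
    mul_mem' := by
      rintro x y ⟨hxI, hxc⟩ ⟨hyI, hyc⟩
      have hcxy : cc x y = 1 := ABcomm x y hxI hxc hyI hyc
      exact ⟨Hprod x y hxI hyI hcxy, fun s hs => by rw [Hml, hxc s hs, hyc s hs, mul_one]⟩
    inv_mem' := by
      rintro x ⟨hxI, hxc⟩
      refine ⟨?_, fun s hs => by rw [Hil]; exact hxc s hs⟩
      calc h⁻¹ * x⁻¹ * h = (h⁻¹ * x * h)⁻¹ := by group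
      _ = (x⁻¹)⁻¹ := by rw [hxI] }
  have hmemA : ∀ x : H, x ∈ A ↔ ((h⁻¹ * x * h = x⁻¹) ∧
      ∀ s : H, (h⁻¹ * s * h = s⁻¹ ∧ s ^ 2 ≠ 1) → cc x s = 1) := fun x => Iff.rfl
  -- shared path : inverted involutions land in A or A·h
  have Shared : ∀ g : H, h⁻¹ * g * h = g⁻¹ → g ^ 2 = 1 → g ∈ A ∨ g * h ∈ A := by
    intro g hgI hg2
    rcases Dich g hgI hg2 with hd | hd
    · exact Or.inl ((hmemA g).2 ⟨hgI, hd⟩)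
    · right
      refine (hmemA _).2 ⟨hinv_gh g hg2, fun s hs => ?_⟩
      rw [Hml, hd s hs, Hsym h s, (Hinvert s).1 hs.1]
      exact hsqsq s
  have Hcase : ∀ g : H, g ∈ A ∨ g * h ∈ A := by
    intro g
    rcases Tph g with e | e | e
    · have hg2 : g ^ 2 = 1 := C2 g e
      have hginv : g⁻¹ = g := by
        rw [pow_two] at hg2; exact inv_eq_of_mul_eq_one_right hg2
      have hgI : h⁻¹ * g * h = g⁻¹ := by
        rw [hginv]
        calc h⁻¹ * g * h = h⁻¹ * (g * h) := by group
        _ = h⁻¹ * (h * g) := by rw [← e]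
        _ = g := by group
      exact Shared g hgI hg2
    · by_cases hg2 : g ^ 2 = 1
      · exact Shared g e hg2
      · exact Or.inl ((hmemA g).2 ⟨e, fun s hs => SA g s ⟨e, hg2⟩ hs⟩)
    · by_cases hch : h * g = g * h
      · have hginv : g⁻¹ = g := by
          rw [pow_two] at e; exact inv_eq_of_mul_eq_one_right e
        have hgI : h⁻¹ * g * h = g⁻¹ := by
          rw [hginv]
          calc h⁻¹ * g * h = h⁻¹ * (g * h) := by group
          _ = h⁻¹ * (h * g) := by rw [← hch]
          _ = g := by group
        exact Shared g hgI e
      · right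
        have hghsq : (g * h) ^ 2 ≠ 1 := by
          rw [Hsq, e, one_mul, hh2, one_mul]
          intro e1
          exact hch ((Hiff g h).1 e1).symm
        exact (hmemA _).2 ⟨hinv_gh g e,
          fun s hs => SA (g * h) s ⟨hinv_gh g e, hghsq⟩ hs⟩
  have hhA : h ∉ A := by
    intro hA
    have e1 := ((hmemA h).1 hA).2 s0 ⟨hs0I, hs0sq⟩
    rw [Hsym, (Hinvert s0).1 hs0I] at e1
    exact hs0sq e1
  have hidx : A.index = 2 := by
    rw [Subgroup.index_eq_two_iff]
    refine ⟨h, fun b => ?_⟩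
    by_cases hb : b ∈ A
    · refine Or.inr ⟨hb, ?_⟩
      intro hbh
      apply hhA
      have := A.mul_mem (A.inv_mem hb) hbh
      simpa using this
    · rcases Hcase b with e | e
      · exact absurd e hb
      · exact Or.inl ⟨e, hb⟩
  refine ⟨A, ?_, hidx, ?_⟩
  · intro a ha b hb
    exact (Hiff a b).1 (ABcomm a b ((hmemA a).1 ha).1 ((hmemA a).1 ha).2
      ((hmemA b).1 hb).1 ((hmemA b).1 hb).2)
  · intro a ha
    exact ((hmemA a).1 ha).1
end

section
/- If H is a finite 2-group such that Φ(H) ≤ Ω(H) ≤ Z(H) and |Ω(H)| ≤ 2ⁿ, then |H| ≤ 2^{n(n+5)/2}. -/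
/-- Ω(H): the subgroup generated by the elements of order at most 2. -/
def OmegaSG (H : Type*) [Group H] : Subgroup H := Subgroup.closure {h : H | h ^ 2 = 1}

section GroupIdentities

variable {G : Type*} [Group G]

private lemma id_A (x w : G) (hw : ∀ g, w * g = g * w) (hw2 : w ^ 2 = 1) :
    (x * w) ^ 2 = x ^ 2 := by
  calc (x*w)^2 = x*(w*x)*w := by simp [pow_two, mul_assoc]
    _ = x*(x*w)*w := by rw [hw x]
    _ = x^2 * w^2 := by simp [pow_two, mul_assoc]
    _ = x^2 := by rw [hw2, mul_one]

private lemma id_B (x y : G) (hc : ∀ g, (y⁻¹*x⁻¹*y*x) * g = g * (y⁻¹*x⁻¹*y*x)) :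
    (x*y)^2 = x^2 * y^2 * (y⁻¹*x⁻¹*y*x) := by
  have h1 : y * x = x * y * (y⁻¹*x⁻¹*y*x) := by simp [pow_two, mul_assoc]
  calc (x*y)^2 = x*(y*x)*y := by simp [pow_two, mul_assoc]
    _ = x*(x*y*(y⁻¹*x⁻¹*y*x))*y := by rw [← h1]
    _ = x*x*y*((y⁻¹*x⁻¹*y*x)*y) := by simp [pow_two, mul_assoc]
    _ = x*x*y*(y*(y⁻¹*x⁻¹*y*x)) := by rw [hc y]
    _ = x^2*y^2*(y⁻¹*x⁻¹*y*x) := by simp [pow_two, mul_assoc]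

private lemma id_C (x z y : G)
    (hcx : ∀ g, (y⁻¹*x⁻¹*y*x) * g = g * (y⁻¹*x⁻¹*y*x)) :
    y⁻¹*(x*z)⁻¹*y*(x*z) = (y⁻¹*x⁻¹*y*x) * (y⁻¹*z⁻¹*y*z) := by
  have h1 : x⁻¹*y*x = y*(y⁻¹*x⁻¹*y*x) := by simp [pow_two, mul_assoc]
  calc y⁻¹*(x*z)⁻¹*y*(x*z) = y⁻¹*z⁻¹*(x⁻¹*y*x)*z := by simp [pow_two, mul_assoc]
    _ = y⁻¹*z⁻¹*(y*(y⁻¹*x⁻¹*y*x))*z := by rw [h1]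
    _ = y⁻¹*z⁻¹*y*((y⁻¹*x⁻¹*y*x)*z) := by simp [pow_two, mul_assoc]
    _ = y⁻¹*z⁻¹*y*(z*(y⁻¹*x⁻¹*y*x)) := by rw [hcx z]
    _ = (y⁻¹*z⁻¹*y*z)*(y⁻¹*x⁻¹*y*x) := by simp [pow_two, mul_assoc]
    _ = (y⁻¹*x⁻¹*y*x)*(y⁻¹*z⁻¹*y*z) := (hcx _).symm

private lemma central_shuffle (p q r : G) (hp : ∀ g, p*g = g*p) (hq : ∀ g, q*g = g*q) :
    p*q*r*p⁻¹*q⁻¹ = r := by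
  calc p*q*r*p⁻¹*q⁻¹ = p*(q*r)*p⁻¹*q⁻¹ := by simp [pow_two, mul_assoc]
    _ = p*(r*q)*p⁻¹*q⁻¹ := by rw [hq r]
    _ = ((r*q)*p)*p⁻¹*q⁻¹ := by rw [← hp (r*q)]
    _ = r := by simp [pow_two, mul_assoc]

end GroupIdentities

private lemma quad_sum_expand {M N ι : Type*} [AddCommGroup M] [AddCommGroup N] [LinearOrder ι]
    (q : M → N) (B : M → M → N)
    (h0 : q 0 = 0)
    (hq : ∀ x y, q (x + y) = q x + q y + B x y)
    (hB2 : ∀ x y z, B x (y + z) = B x y + B x z)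
    (s : Finset ι) (v : ι → M) :
    q (∑ i ∈ s, v i)
      = (∑ i ∈ s, q (v i))
        + ∑ i ∈ s, ∑ j ∈ s.filter (fun j => i < j), B (v i) (v j) := by
  classical
  have hsym : ∀ x y, B x y = B y x := by
    intro x y
    have h1 := hq x y
    have h2 := hq y x
    rw [add_comm x y] at h1
    have h3 : q y + q x + B x y = q y + q x + B y x := by
      calc q y + q x + B x y = q x + q y + B x y := by rw [add_comm (q y) (q x)]
        _ = q (y + x) := h1.symm
        _ = q y + q x + B y x := h2
    exact add_left_cancel h3
  induction s using Finset.induction_on with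
  | empty => simp [h0]
  | @insert a s ha ih =>
    have hBa : ∀ (t : Finset ι), B (v a) (∑ j ∈ t, v j) = ∑ j ∈ t, B (v a) (v j) :=
      fun t => map_sum (AddMonoidHom.mk' (fun y => B (v a) y) (fun y z => hB2 (v a) y z)) _ _
    rw [Finset.sum_insert ha, hq, ih, hBa]
    rw [Finset.sum_insert ha (f := fun i => q (v i))]
    rw [Finset.sum_insert ha
      (f := fun i => ∑ j ∈ (insert a s).filter (fun j => i < j), B (v i) (v j))]
    rw [Finset.filter_insert, if_neg (lt_irrefl a)]
    have hinner : ∀ i ∈ s, (∑ j ∈ (insert a s).filter (fun j => i < j), B (v i) (v j))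
        = (if i < a then B (v i) (v a) else 0) + ∑ j ∈ s.filter (fun j => i < j), B (v i) (v j) := by
      intro i hi
      rw [Finset.filter_insert]
      by_cases hia : i < a
      · rw [if_pos hia, if_pos hia, Finset.sum_insert (by
          simp only [Finset.mem_filter]; exact fun h => ha h.1)]
      · rw [if_neg hia, if_neg hia, zero_add]
    rw [Finset.sum_congr rfl hinner, Finset.sum_add_distrib]
    have hsplit : ∑ j ∈ s, B (v a) (v j)
        = (∑ j ∈ s.filter (fun j => a < j), B (v a) (v j))
          + ∑ i ∈ s, (if i < a then B (v i) (v a) else 0) := by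
      rw [← Finset.sum_filter]
      rw [← Finset.sum_filter_add_sum_filter_not s (fun j => a < j) (fun j => B (v a) (v j))]
      congr 1
      rw [Finset.filter_congr (q := fun j => j < a) (fun j hj => by
        have hne : j ≠ a := ne_of_mem_of_not_mem hj ha
        simp only [not_lt]
        exact ⟨fun h => lt_of_le_of_ne h hne, fun h => le_of_lt h⟩)]
      exact Finset.sum_congr rfl (fun j _ => hsym (v a) (v j))
    rw [hsplit]
    abel

open MvPolynomial in
private lemma aniso_le {d m : ℕ} (q : (Fin d → ZMod 2) → Fin m → ZMod 2)
    (B : (Fin d → ZMod 2) → (Fin d → ZMod 2) → Fin m → ZMod 2)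
    (h0 : q 0 = 0)
    (hq : ∀ x y, q (x + y) = q x + q y + B x y)
    (hB1 : ∀ x y z, B (x + y) z = B x z + B y z)
    (hB2 : ∀ x y z, B x (y + z) = B x y + B x z)
    (haniso : ∀ x, q x = 0 → x = 0) :
    d ≤ 2 * m := by
  classical
  have hc2 : ∀ c : ZMod 2, c = 0 ∨ c = 1 := by decide
  have hB01 : ∀ z, B 0 z = 0 := by
    intro z
    have h := hB1 0 0 z
    rw [add_zero] at h
    have h' : B 0 z + 0 = B 0 z + B 0 z := by rw [add_zero]; exact h
    exact (add_left_cancel h').symm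
  have hB02 : ∀ z, B z 0 = 0 := by
    intro z
    have h := hB2 z 0 0
    rw [add_zero] at h
    have h' : B z 0 + 0 = B z 0 + B z 0 := by rw [add_zero]; exact h
    exact (add_left_cancel h').symm
  have hqs : ∀ (c : ZMod 2) w, q (c • w) = c • q w := by
    intro c w
    rcases hc2 c with h | h <;> subst h <;> simp [h0]
  have hBs : ∀ (c c' : ZMod 2) w w', B (c • w) (c' • w') = (c * c') • B w w' := by
    intro c c' w w'
    rcases hc2 c with h | h <;> rcases hc2 c' with h' | h' <;> subst h <;> subst h' <;>
      simp [hB01, hB02]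
  set e : Fin d → (Fin d → ZMod 2) := fun i => Pi.single i 1 with he
  have hxsum : ∀ x : Fin d → ZMod 2, x = ∑ i, x i • e i := by
    intro x
    have : ∀ i, x i • e i = Pi.single i (x i) := by
      intro i
      rw [he]
      ext j
      by_cases hij : j = i
      · subst hij; simp
      · simp [Pi.single_eq_of_ne hij]
    rw [Finset.sum_congr rfl (fun i _ => this i), Finset.univ_sum_single]
  -- expansion of q
  have hexp : ∀ x : Fin d → ZMod 2,
      q x = (∑ i, (x i • q (e i)))
        + ∑ i, ∑ j ∈ Finset.univ.filter (fun j => i < j), (x i * x j) • B (e i) (e j) := by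
    intro x
    conv_lhs => rw [hxsum x]
    rw [quad_sum_expand q B h0 hq hB2 Finset.univ (fun i => x i • e i)]
    congr 1
    · exact Finset.sum_congr rfl (fun i _ => hqs _ _)
    · exact Finset.sum_congr rfl (fun i _ => Finset.sum_congr rfl (fun j _ => hBs _ _ _ _))
  -- the polynomials
  set f : Fin m → MvPolynomial (Fin d) (ZMod 2) := fun k =>
    (∑ i, C (q (e i) k) * X i) +
      ∑ i, ∑ j ∈ Finset.univ.filter (fun j => i < j), C (B (e i) (e j) k) * (X i * X j) with hf
  have heval : ∀ (x : Fin d → ZMod 2) (k : Fin m), eval x (f k) = q x k := by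
    intro x k
    rw [hf]
    simp only [map_add, map_sum, map_mul, eval_C, eval_X]
    rw [hexp x]
    simp only [Pi.add_apply, Finset.sum_apply, Pi.smul_apply, smul_eq_mul]
    congr 1
    · exact Finset.sum_congr rfl (fun i _ => by ring)
    · exact Finset.sum_congr rfl (fun i _ => Finset.sum_congr rfl (fun j _ => by ring))
  have hdeg : ∀ k, (f k).totalDegree ≤ 2 := by
    intro k
    rw [hf]
    refine le_trans (MvPolynomial.totalDegree_add _ _) (max_le ?_ ?_)
    · refine le_trans (MvPolynomial.totalDegree_finset_sum _ _) (Finset.sup_le fun i _ => ?_)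
      refine le_trans (MvPolynomial.totalDegree_mul _ _) ?_
      simp [MvPolynomial.totalDegree_C, MvPolynomial.totalDegree_X]
    · refine le_trans (MvPolynomial.totalDegree_finset_sum _ _) (Finset.sup_le fun i _ => ?_)
      refine le_trans (MvPolynomial.totalDegree_finset_sum _ _) (Finset.sup_le fun j _ => ?_)
      refine le_trans (MvPolynomial.totalDegree_mul _ _) ?_
      refine le_trans (add_le_add (le_refl _) (MvPolynomial.totalDegree_mul _ _)) ?_
      simp [MvPolynomial.totalDegree_C, MvPolynomial.totalDegree_X]
  by_contra hlt
  push_neg at hlt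
  have hsum : (∑ k : Fin m, (f k).totalDegree) < Fintype.card (Fin d) := by
    calc (∑ k : Fin m, (f k).totalDegree) ≤ ∑ _k : Fin m, 2 :=
          Finset.sum_le_sum (fun k _ => hdeg k)
      _ = 2 * m := by simp [Finset.sum_const, mul_comm]
      _ < d := hlt
      _ = Fintype.card (Fin d) := (Fintype.card_fin d).symm
  have hdvd := _root_.char_dvd_card_solutions_of_fintype_sum_lt (K := ZMod 2) 2 hsum
  have hcard : ∀ inst : Fintype { x : Fin d → ZMod 2 // ∀ k, eval x (f k) = 0 },
      @Fintype.card _ inst = 1 := by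
    intro inst
    rw [@Fintype.card_eq_one_iff _ inst]
    refine ⟨⟨0, fun k => by rw [heval]; rw [h0]; rfl⟩, ?_⟩
    rintro ⟨x, hx⟩
    have : x = 0 := haniso x (funext fun k => by rw [← heval x k]; exact hx k)
    exact Subtype.ext this
  rw [hcard _] at hdvd
  omega

private lemma coatom_facts {G : Type*} [Group G] [Finite G] (hp : IsPGroup 2 G)
    {M : Subgroup G} (hM : IsCoatom M) :
    (∀ x : G, x ^ 2 ∈ M) ∧ (∀ x y : G, y⁻¹ * x⁻¹ * y * x ∈ M) := by
  have hfact : Fact (Nat.Prime 2) := ⟨Nat.prime_two⟩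
  have hnil : Group.IsNilpotent G := hp.isNilpotent
  haveI hnorm : M.Normal :=
    Subgroup.NormalizerCondition.normal_of_coatom M (normalizerCondition_of_isNilpotent (G := G)) hM
  have hQp : IsPGroup 2 (G ⧸ M) := hp.to_quotient M
  have hone : ∀ g : G ⧸ M, g ≠ 1 → Subgroup.zpowers g = ⊤ := by
    intro g hg
    have hle : M ≤ (Subgroup.zpowers g).comap (QuotientGroup.mk' M) := by
      intro x hx
      have h1 : QuotientGroup.mk' M x = 1 := (QuotientGroup.eq_one_iff x).mpr hx
      exact Subgroup.mem_comap.mpr (by rw [h1]; exact Subgroup.one_mem _)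
    rcases eq_or_lt_of_le hle with heq | hlt
    · exfalso
      obtain ⟨x, hx⟩ := QuotientGroup.mk'_surjective M g
      have hxmem : x ∈ (Subgroup.zpowers g).comap (QuotientGroup.mk' M) := by
        simp [Subgroup.mem_comap, hx, Subgroup.mem_zpowers]
      rw [← heq] at hxmem
      exact hg (by rw [← hx]; exact (QuotientGroup.eq_one_iff x).mpr hxmem)
    · have htop := hM.2 _ hlt
      have hsurj := QuotientGroup.mk'_surjective M
      calc Subgroup.zpowers g
          = Subgroup.map (QuotientGroup.mk' M)
              ((Subgroup.zpowers g).comap (QuotientGroup.mk' M)) :=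
            (Subgroup.map_comap_eq_self_of_surjective hsurj _).symm
        _ = ⊤ := by rw [htop]; exact Subgroup.map_top_of_surjective _ hsurj
  have hsq : ∀ g : G ⧸ M, g ^ 2 = 1 := by
    intro g
    by_contra hg
    have hgne : g ≠ 1 := fun h => hg (by rw [h]; simp)
    have htop := hone (g ^ 2) hg
    have h1 : orderOf g ∣ Nat.card (G ⧸ M) := orderOf_dvd_natCard g
    have h2 : Nat.card (G ⧸ M) = orderOf (g ^ 2) := by
      rw [← Nat.card_zpowers, htop, Subgroup.card_top]
    obtain ⟨k, hk⟩ := IsPGroup.iff_orderOf.mp hQp g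
    obtain ⟨e, _, hoe⟩ := (Nat.dvd_prime_pow Nat.prime_two).mp (dvd_of_eq hk)
    have he2 : 2 ≤ e := by
      by_contra h
      interval_cases e
      · rw [pow_zero] at hoe; exact hgne (orderOf_eq_one_iff.mp (hoe))
      · rw [pow_one] at hoe
        exact hg (by rw [← hoe]; exact pow_orderOf_eq_one g)
    have h3 : orderOf (g ^ 2) = 2 ^ (e - 1) := by
      rw [orderOf_pow, hoe]
      have hgcd : Nat.gcd (2 ^ e) 2 = 2 := by
        rw [Nat.gcd_comm]
        exact Nat.gcd_eq_left (dvd_pow_self 2 (by omega))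
      rw [hgcd]
      rw [show (2:ℕ) ^ e = 2 ^ (e - 1) * 2 by rw [← pow_succ]; congr 1; omega]
      exact Nat.mul_div_cancel _ (by norm_num)
    have h4 : orderOf g ≤ 2 ^ (e - 1) :=
      Nat.le_of_dvd (by positivity) (by rw [← h3, ← h2]; exact h1)
    rw [hoe] at h4
    have hlt2 : (2:ℕ) ^ (e - 1) < 2 ^ e := Nat.pow_lt_pow_right one_lt_two (by omega)
    exact absurd h4 (not_le.mpr hlt2)
  have hcomm : ∀ a b : G ⧸ M, a * b = b * a := by
    have hinv : ∀ v : G ⧸ M, v⁻¹ = v := fun v =>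
      inv_eq_of_mul_eq_one_right (by rw [← pow_two]; exact hsq v)
    intro a b
    calc a * b = (a * b)⁻¹ := (hinv _).symm
      _ = b⁻¹ * a⁻¹ := mul_inv_rev a b
      _ = b * a := by rw [hinv, hinv]
  constructor
  · intro x
    apply (QuotientGroup.eq_one_iff _).mp
    have : ((x : G ⧸ M)) ^ 2 = 1 := hsq _
    rwa [← QuotientGroup.mk_pow] at this
  · intro x y
    apply (QuotientGroup.eq_one_iff _).mp
    have : ((y⁻¹ * x⁻¹ * y * x : G) : G ⧸ M)
        = (y : G ⧸ M)⁻¹ * (x : G ⧸ M)⁻¹ * (y : G ⧸ M) * (x : G ⧸ M) := by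
      simp [QuotientGroup.mk_mul, QuotientGroup.mk_inv]
    rw [this, hcomm (y : G ⧸ M)⁻¹ (x : G ⧸ M)⁻¹]
    group

private lemma omega_central_aux {G : Type*} [Group G] [Finite G] (Ω : Subgroup G) [hN : Ω.Normal]
    (hcent : ∀ w ∈ Ω, ∀ g : G, w * g = g * w)
    (hw2 : ∀ w ∈ Ω, w ^ 2 = 1)
    (hsqm : ∀ x : G, x ^ 2 ∈ Ω)
    (hcm : ∀ x y : G, y⁻¹ * x⁻¹ * y * x ∈ Ω)
    (hback : ∀ x : G, x ^ 2 = 1 → x ∈ Ω)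
    {n : ℕ} (hcard : Nat.card Ω ≤ 2 ^ n) :
    Nat.card G ≤ 2 ^ (3 * n) := by
  classical
  -- commutativity instances
  letI cΩ : CommGroup Ω :=
    { (inferInstance : Group Ω) with
      mul_comm := fun a b => Subtype.ext (hcent a.1 a.2 b.1) }
  have hV2 : ∀ v : G ⧸ Ω, v ^ 2 = 1 := by
    intro v
    obtain ⟨x, rfl⟩ := QuotientGroup.mk_surjective v
    rw [← QuotientGroup.mk_pow]
    exact (QuotientGroup.eq_one_iff _).mpr (hsqm x)
  have hVinv : ∀ v : G ⧸ Ω, v⁻¹ = v := fun v =>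
    inv_eq_of_mul_eq_one_right (by rw [← pow_two]; exact hV2 v)
  letI cV : CommGroup (G ⧸ Ω) :=
    { (inferInstance : Group (G ⧸ Ω)) with
      mul_comm := fun a b => by
        calc a * b = (a * b)⁻¹ := (hVinv _).symm
          _ = b⁻¹ * a⁻¹ := mul_inv_rev a b
          _ = b * a := by rw [hVinv, hVinv] }
  -- elementary abelian facts in subgroup coercion
  have hΩ2 : ∀ w : Ω, w ^ 2 = 1 := by
    intro w
    have h := hw2 w.1 w.2
    apply Subtype.ext
    simpa using h
  -- module structures
  letI mΩ : Module (ZMod 2) (Additive Ω) := AddCommGroup.zmodModule (by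
    intro x
    refine Additive.toMul.injective ?_
    rw [two_nsmul, toMul_add, ← pow_two, hΩ2 (Additive.toMul x)]
    rfl)
  letI mV : Module (ZMod 2) (Additive (G ⧸ Ω)) := AddCommGroup.zmodModule (by
    intro x
    refine Additive.toMul.injective ?_
    rw [two_nsmul, toMul_add, ← pow_two, hV2 (Additive.toMul x)]
    rfl)
  set m' := Module.finrank (ZMod 2) (Additive Ω) with hm'
  set dV := Module.finrank (ZMod 2) (Additive (G ⧸ Ω)) with hdV
  let eΩ := (Module.finBasis (ZMod 2) (Additive Ω)).equivFun
  let eV := (Module.finBasis (ZMod 2) (Additive (G ⧸ Ω))).equivFun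
  -- the quadratic map on the quotient
  have hwd : ∀ a b : G, (QuotientGroup.leftRel Ω) a b →
      (⟨a ^ 2, hsqm a⟩ : Ω) = ⟨b ^ 2, hsqm b⟩ := by
    intro a b hab
    have hw : a⁻¹ * b ∈ Ω := (QuotientGroup.leftRel_apply).mp hab
    apply Subtype.ext
    show a ^ 2 = b ^ 2
    have hb : b = a * (a⁻¹ * b) := by group
    rw [hb, id_A a (a⁻¹ * b) (hcent _ hw) (hw2 _ hw)]
  let qq : G ⧸ Ω → Ω := fun v => Quotient.liftOn' v (fun x => (⟨x ^ 2, hsqm x⟩ : Ω)) hwd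
  have qq_mk : ∀ x : G, ((qq (QuotientGroup.mk x) : Ω) : G) = x ^ 2 := fun x => rfl
  let qA : Additive (G ⧸ Ω) → Additive Ω := fun v => Additive.ofMul (qq (Additive.toMul v))
  have hadd_mk : ∀ x y : G,
      Additive.ofMul (QuotientGroup.mk x : G ⧸ Ω) + Additive.ofMul (QuotientGroup.mk y)
        = Additive.ofMul (QuotientGroup.mk (x * y) : G ⧸ Ω) := fun x y => rfl
  have hrep : ∀ u : Additive (G ⧸ Ω), ∃ x : G, u = Additive.ofMul (QuotientGroup.mk x) := by
    intro u
    obtain ⟨x, hx⟩ := QuotientGroup.mk_surjective (Additive.toMul u)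
    exact ⟨x, by rw [hx]; rfl⟩
  have h0A : qA 0 = 0 := by
    show Additive.ofMul (qq (Additive.toMul 0)) = 0
    have : qq (Additive.toMul (0 : Additive (G ⧸ Ω))) = 1 := by
      apply Subtype.ext
      show ((qq (QuotientGroup.mk 1) : Ω) : G) = 1
      rw [qq_mk 1, one_pow]
    rw [this]
    rfl
  have haniA : ∀ v, qA v = 0 → v = 0 := by
    intro v hv
    obtain ⟨x, rfl⟩ := hrep v
    have h1 : qq (QuotientGroup.mk x) = 1 := by
      have : Additive.toMul (qA (Additive.ofMul (QuotientGroup.mk x : G ⧸ Ω))) = Additive.toMul (0 : Additive Ω) := by rw [hv]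
      exact this
    have h2 : x ^ 2 = 1 := by rw [← qq_mk x, h1]; rfl
    have h3 : (QuotientGroup.mk x : G ⧸ Ω) = 1 := (QuotientGroup.eq_one_iff x).mpr (hback x h2)
    show Additive.ofMul (QuotientGroup.mk x : G ⧸ Ω) = 0
    rw [h3]
    rfl
  -- value of the polarization on representatives
  have hBA_mk : ∀ x y : G,
      ((Additive.toMul (qA (Additive.ofMul (QuotientGroup.mk x : G ⧸ Ω) + Additive.ofMul (QuotientGroup.mk y))
        - qA (Additive.ofMul (QuotientGroup.mk x : G ⧸ Ω))
        - qA (Additive.ofMul (QuotientGroup.mk y : G ⧸ Ω))) : Ω) : G)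
        = y⁻¹ * x⁻¹ * y * x := by
    intro x y
    rw [hadd_mk x y]
    rw [toMul_sub, toMul_sub]
    rw [div_eq_mul_inv, div_eq_mul_inv]
    have hval : ∀ g : G, Additive.toMul (qA (Additive.ofMul (QuotientGroup.mk g : G ⧸ Ω))) = qq (QuotientGroup.mk g) := fun g => rfl
    rw [hval, hval, hval]
    push_cast
    rw [qq_mk, qq_mk, qq_mk]
    rw [id_B x y (hcent _ (hcm x y))]
    exact central_shuffle (x ^ 2) (y ^ 2) _ (hcent _ (hsqm x)) (hcent _ (hsqm y))
  have hBadd : ∀ u w t : Additive (G ⧸ Ω),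
      qA (u + w + t) - qA (u + w) - qA t
        = (qA (u + t) - qA u - qA t) + (qA (w + t) - qA w - qA t) := by
    intro u w t
    obtain ⟨x, rfl⟩ := hrep u
    obtain ⟨y, rfl⟩ := hrep w
    obtain ⟨z, rfl⟩ := hrep t
    apply Additive.toMul.injective
    apply Subtype.ext
    rw [toMul_add]
    rw [Subgroup.coe_mul]
    rw [hBA_mk x z, hBA_mk y z]
    rw [hadd_mk x y]
    rw [hBA_mk (x * y) z]
    exact id_C x y z (hcent _ (hcm x z))
  -- transport to coordinates
  let q' : (Fin dV → ZMod 2) → (Fin m' → ZMod 2) := fun xc => eΩ (qA (eV.symm xc))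
  let B' : (Fin dV → ZMod 2) → (Fin dV → ZMod 2) → (Fin m' → ZMod 2) :=
    fun xc yc => q' (xc + yc) - q' xc - q' yc
  have hqd : ∀ xc yc, q' (xc + yc) = eΩ (qA (eV.symm xc + eV.symm yc)) := by
    intro xc yc
    show eΩ (qA (eV.symm (xc + yc))) = _
    rw [map_add]
  have hB'eq : ∀ xc yc, B' xc yc
      = eΩ (qA (eV.symm xc + eV.symm yc) - qA (eV.symm xc) - qA (eV.symm yc)) := by
    intro xc yc
    show q' (xc + yc) - q' xc - q' yc = _
    rw [hqd, map_sub, map_sub]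
  have hdle : dV ≤ 2 * m' := by
    apply aniso_le q' B'
    · show eΩ (qA (eV.symm 0)) = 0
      rw [map_zero, h0A, map_zero]
    · intro x y
      show q' (x + y) = q' x + q' y + (q' (x + y) - q' x - q' y)
      abel
    · intro x y z
      rw [hB'eq, hB'eq, hB'eq]
      rw [show eV.symm (x + y) = eV.symm x + eV.symm y from by rw [map_add]]
      rw [hBadd (eV.symm x) (eV.symm y) (eV.symm z)]
      rw [map_add]
    · intro x y z
      have hsym : ∀ a b, B' a b = B' b a := by
        intro a b
        show q' (a + b) - q' a - q' b = q' (b + a) - q' b - q' a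
        rw [add_comm a b]
        abel
      rw [hsym x (y + z), hsym x y, hsym x z]
      rw [hB'eq, hB'eq, hB'eq]
      rw [show eV.symm (y + z) = eV.symm y + eV.symm z from by rw [map_add]]
      rw [hBadd (eV.symm y) (eV.symm z) (eV.symm x)]
      rw [map_add]
    · intro x hx
      have h1 : qA (eV.symm x) = 0 := by
        have := congrArg eΩ.symm hx
        rw [LinearEquiv.symm_apply_apply, map_zero] at this
        exact this
      have h2 : eV.symm x = 0 := haniA _ h1
      have := congrArg eV h2
      rw [LinearEquiv.apply_symm_apply, map_zero] at this
      exact this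
  -- cardinalities
  letI ftΩ : Fintype (Additive Ω) := Fintype.ofFinite _
  letI ftV : Fintype (Additive (G ⧸ Ω)) := Fintype.ofFinite _
  have hcardΩ : Nat.card Ω = 2 ^ m' := by
    rw [Nat.card_congr (Additive.ofMul (α := Ω)), Nat.card_eq_fintype_card,
      Module.card_eq_pow_finrank (K := ZMod 2), ZMod.card]
  have hcardV : Nat.card (G ⧸ Ω) = 2 ^ dV := by
    rw [Nat.card_congr (Additive.ofMul (α := G ⧸ Ω)), Nat.card_eq_fintype_card,
      Module.card_eq_pow_finrank (K := ZMod 2), ZMod.card]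
  have hmn : m' ≤ n := by
    have h := hcardΩ ▸ hcard
    exact (Nat.pow_le_pow_iff_right (by norm_num)).mp h
  calc Nat.card G = Nat.card (G ⧸ Ω) * Nat.card Ω :=
        Subgroup.card_eq_card_quotient_mul_card_subgroup Ω
    _ = 2 ^ dV * 2 ^ m' := by rw [hcardΩ, hcardV]
    _ = 2 ^ (dV + m') := (pow_add 2 dV m').symm
    _ ≤ 2 ^ (3 * n) := Nat.pow_le_pow_right (by norm_num) (by omega)

/-- **Lemma 4.14**: if `H` is a finite 2-group with `Φ(H) ≤ Ω(H) ≤ Z(H)` and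
`|Ω(H)| ≤ 2ⁿ`, then `|H| ≤ 2^(n(n+5)/2)`. -/
theorem card_le_of_omega_central (H : Type*) [Group H] [Finite H] (h2 : IsPGroup 2 H)
    (n : ℕ) (h1 : frattini H ≤ OmegaSG H) (h2' : OmegaSG H ≤ Subgroup.center H)
    (h3 : Nat.card (OmegaSG H) ≤ 2 ^ n) :
    Nat.card H ≤ 2 ^ (n * (n + 5) / 2) := by
  classical
  -- centrality of elements of Ω
  have hcent : ∀ w ∈ OmegaSG H, ∀ g : H, w * g = g * w := fun w hw g =>
    (Subgroup.mem_center_iff.mp (h2' hw) g).symm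
  -- every element of Ω squares to 1
  have hw2 : ∀ w ∈ OmegaSG H, w ^ 2 = 1 := by
    intro w hw
    refine Subgroup.closure_induction ?_ ?_ ?_ ?_ hw
    · exact fun x hx => hx
    · exact one_pow 2
    · intro x y hx hy hx2 hy2
      have hc : Commute x y := (Subgroup.mem_center_iff.mp (h2' hx) y).symm
      rw [hc.mul_pow, hx2, hy2, one_mul]
    · intro x hx hx2
      rw [inv_pow, hx2, inv_one]
  -- Ω is normal
  haveI : (OmegaSG H).Normal := by
    constructor
    intro x hx g
    have h := hcent x hx g
    have : g * x * g⁻¹ = x := by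
      rw [← h]
      group
    rw [this]
    exact hx
  -- membership below every coatom gives frattini membership
  have hfr : ∀ z : H, (∀ M : Subgroup H, IsCoatom M → z ∈ M) → z ∈ frattini H := by
    intro z hz
    rw [frattini, Order.radical]
    rw [Subgroup.mem_iInf]
    intro M
    rw [Subgroup.mem_iInf]
    intro hM
    exact hz M hM
  have hsqm : ∀ x : H, x ^ 2 ∈ OmegaSG H := fun x =>
    h1 (hfr _ (fun M hM => (coatom_facts h2 hM).1 x))
  have hcm : ∀ x y : H, y⁻¹ * x⁻¹ * y * x ∈ OmegaSG H := fun x y =>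
    h1 (hfr _ (fun M hM => (coatom_facts h2 hM).2 x y))
  have hback : ∀ x : H, x ^ 2 = 1 → x ∈ OmegaSG H := fun x hx =>
    Subgroup.subset_closure hx
  have hmain := omega_central_aux (OmegaSG H) hcent hw2 hsqm hcm hback h3
  refine hmain.trans (Nat.pow_le_pow_right (by norm_num) ?_)
  rw [Nat.le_div_iff_mul_le (by norm_num : 0 < 2)]
  nlinarith [sq_nonneg n]
end
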